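/- Suppose no outcome fully reveals High quality: p_L(s_m) > 0 (equivalently, the likelihood ratio p_H(s)/p_L(s) is bounded from above over S). For each n ≥ 1 let σ̂_n be a most selective n-equilibrium strategy and Π_n = Π^n(σ̂_n) the corresponding total surplus. Then the sequence (Π_n) is eventually weakly decreasing (there exists N such that Π_{n+1} ≤ Π_n for all n ≥ N) and converges to the no-information benchmark max{0, ρ − c}. -/

import Mathlib

open Finset Filter Topology

noncomputable section

/-- Probability that a single buyer rejects the seller, given conditional signal
distribution `p` and strategy `σ`: `r_θ(σ) = 1 - Σ_s p_θ(s)·σ(s)`. -/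
def rej {m : ℕ} (p σ : Fin m → ℝ) : ℝ := 1 - ∑ s, p s * σ s

/-- `ν_θ(σ) = (1/n)·Σ_{k=0}^{n-1} r_θ(σ)^k`: probability of being visited. -/
def visit (n : ℕ) {m : ℕ} (p σ : Fin m → ℝ) : ℝ :=
  (1 / (n : ℝ)) * ∑ k ∈ Finset.range n, rej p σ ^ k

/-- Interim belief `Ψ(σ) = ρ·ν_H(σ) / (ρ·ν_H(σ) + (1-ρ)·ν_L(σ))`. -/
def interim (ρ : ℝ) (n : ℕ) {m : ℕ} (pL pH σ : Fin m → ℝ) : ℝ :=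
  ρ * visit n pH σ / (ρ * visit n pH σ + (1 - ρ) * visit n pL σ)

/-- Posterior belief `Q_ψ(s) = ψ·p_H(s) / (ψ·p_H(s) + (1-ψ)·p_L(s))`. -/
def post {m : ℕ} (ψ : ℝ) (pL pH : Fin m → ℝ) (s : Fin m) : ℝ :=
  ψ * pH s / (ψ * pH s + (1 - ψ) * pL s)

/-- A strategy maps each signal to an acceptance probability in `[0,1]`. -/
def IsStrategy {m : ℕ} (σ : Fin m → ℝ) : Prop := ∀ s, 0 ≤ σ s ∧ σ s ≤ 1

/-- `σ` is an equilibrium strategy: with `ψ* = Ψ(σ)`, accept for sure when the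
posterior exceeds `c`, reject for sure when it falls below `c`. -/
def IsEquilibrium (ρ c : ℝ) (n : ℕ) {m : ℕ} (pL pH σ : Fin m → ℝ) : Prop :=
  IsStrategy σ ∧
  ∀ s : Fin m,
    (c < post (interim ρ n pL pH σ) pL pH s → σ s = 1) ∧
    (post (interim ρ n pL pH σ) pL pH s < c → σ s = 0)

/-- Total surplus `Π(σ) = (1-c)·ρ·(1-r_H(σ)^n) - c·(1-ρ)·(1-r_L(σ)^n)`. -/
def surplus (ρ c : ℝ) (n : ℕ) {m : ℕ} (pL pH σ : Fin m → ℝ) : ℝ :=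
  (1 - c) * ρ * (1 - rej pH σ ^ n) - c * (1 - ρ) * (1 - rej pL σ ^ n)

/-- The most selective equilibrium strategy. -/
def MostSelective (ρ c : ℝ) (n : ℕ) {m : ℕ} (pL pH σ : Fin m → ℝ) : Prop :=
  IsEquilibrium ρ c n pL pH σ ∧
  ∀ σ' : Fin m → ℝ, IsEquilibrium ρ c n pL pH σ' → ∀ s, σ s ≤ σ' s

/-- The least selective equilibrium strategy. -/
def LeastSelective (ρ c : ℝ) (n : ℕ) {m : ℕ} (pL pH σ : Fin m → ℝ) : Prop :=
  IsEquilibrium ρ c n pL pH σ ∧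
  ∀ σ' : Fin m → ℝ, IsEquilibrium ρ c n pL pH σ' → ∀ s, σ' s ≤ σ s

/-- An experiment: `p_L, p_H` are probability mass functions with full joint support,
indexed so that likelihood ratios are nondecreasing. -/
def IsExperiment {m : ℕ} (pL pH : Fin m → ℝ) : Prop :=
  (∀ s, 0 ≤ pL s) ∧ (∀ s, 0 ≤ pH s) ∧
  (∑ s, pL s = 1) ∧ (∑ s, pH s = 1) ∧
  (∀ s, 0 < pL s + pH s) ∧
  (∀ i j : Fin m, i ≤ j → pH i * pL j ≤ pH j * pL i)

/-- A strategy is monotone: a positive acceptance probability at `s_i` forces sure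
acceptance at every signal with strictly higher likelihood ratio. -/
def MonotoneStrategy {m : ℕ} (pL pH σ : Fin m → ℝ) : Prop :=
  ∀ i j : Fin m, 0 < σ i → pH i * pL j < pH j * pL i → σ j = 1

/- Auxiliary development -/
namespace MB

open Finset Filter Topology

/-- geometric partial sum -/
def SS (n : ℕ) (x : ℝ) : ℝ := ∑ k ∈ Finset.range n, x ^ k

/-- likelihood ratio -/
def lr {m : ℕ} (pL pH : Fin m → ℝ) (s : Fin m) : ℝ := pH s / pL s

/-- acceptance probability -/
def acc {m : ℕ} (p σ : Fin m → ℝ) : ℝ := ∑ s, p s * σ s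

/-- division-free "bracket" whose sign matches `post - c`. -/
def Bf (ρ c : ℝ) (n : ℕ) {m : ℕ} (pL pH σ : Fin m → ℝ) (s : Fin m) : ℝ :=
  (1-c)*ρ*(SS n (rej pH σ))*pH s - c*(1-ρ)*(SS n (rej pL σ))*pL s

/-- all standing hypotheses -/
structure Setup (ρ c : ℝ) {m : ℕ} (pL pH : Fin m → ℝ) (top : Fin m) : Prop where
  hρ0 : 0 < ρ
  hρ1 : ρ < 1
  hc0 : 0 < c
  hc1 : c < 1
  hpL : ∀ s, 0 < pL s
  hpH : ∀ s, 0 ≤ pH s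
  hsL : ∑ s, pL s = 1
  hsH : ∑ s, pH s = 1
  hltop : ∀ s, lr pL pH s ≤ lr pL pH top

namespace Setup

variable {ρ c : ℝ} {m : ℕ} {pL pH : Fin m → ℝ} {top : Fin m}

lemma pH_eq (S : Setup ρ c pL pH top) (s : Fin m) : pH s = lr pL pH s * pL s := by
  rw [lr, div_mul_cancel₀]
  exact (S.hpL s).ne'

lemma lr_nonneg (S : Setup ρ c pL pH top) (s : Fin m) : 0 ≤ lr pL pH s :=
  div_nonneg (S.hpH s) (S.hpL s).le

lemma one_le_ltop (S : Setup ρ c pL pH top) : 1 ≤ lr pL pH top := by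
  by_contra h
  push_neg at h
  have hlt : ∀ s, pH s < pL s := by
    intro s
    have h1 : lr pL pH s < 1 := lt_of_le_of_lt (S.hltop s) h
    have := S.hpL s
    calc pH s = lr pL pH s * pL s := S.pH_eq s
    _ < 1 * pL s := by nlinarith
    _ = pL s := one_mul _
  have : (∑ s, pH s) < ∑ s, pL s := by
    apply Finset.sum_lt_sum_of_nonempty
    · exact Finset.univ_nonempty_iff.2 ⟨top⟩
    · intro s _; exact hlt s
  rw [S.hsL, S.hsH] at this
  exact lt_irrefl _ this

lemma al_pos (S : Setup ρ c pL pH top) : 0 < (1-c)*ρ := by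
  have := S.hρ0; have := S.hc1; nlinarith

lemma be_pos (S : Setup ρ c pL pH top) : 0 < c*(1-ρ) := by
  have := S.hc0; have := S.hρ1; nlinarith

end Setup

/-! ### geometric sum facts -/

lemma SS_nonneg {n : ℕ} {x : ℝ} (hx : 0 ≤ x) : 0 ≤ SS n x :=
  Finset.sum_nonneg fun k _ => pow_nonneg hx k

lemma one_le_SS {n : ℕ} (hn : 1 ≤ n) {x : ℝ} (hx : 0 ≤ x) : 1 ≤ SS n x := by
  have h0 : (0:ℕ) ∈ Finset.range n := Finset.mem_range.2 hn
  calc (1:ℝ) = x ^ 0 := (pow_zero x).symm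
  _ ≤ ∑ k ∈ Finset.range n, x ^ k :=
      Finset.single_le_sum (fun k _ => pow_nonneg hx k) h0

lemma SS_pos {n : ℕ} (hn : 1 ≤ n) {x : ℝ} (hx : 0 ≤ x) : 0 < SS n x :=
  lt_of_lt_of_le one_pos (one_le_SS hn hx)

lemma SS_mul_one_sub (n : ℕ) (x : ℝ) : SS n x * (1 - x) = 1 - x ^ n := by
  have := geom_sum_mul x n
  unfold SS
  nlinarith [this]

lemma SS_le (n : ℕ) {x : ℝ} (hx0 : 0 ≤ x) (hx1 : x ≤ 1) : SS n x ≤ n := by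
  unfold SS
  calc ∑ k ∈ Finset.range n, x ^ k ≤ ∑ k ∈ Finset.range n, 1 :=
    Finset.sum_le_sum fun k _ => pow_le_one₀ hx0 hx1
  _ = n := by simp

/-- cross inequality: for `0 ≤ y ≤ x`, `y^n * SS n x ≤ x^n * SS n y`. -/
lemma SS_cross {n : ℕ} {x y : ℝ} (hy : 0 ≤ y) (hxy : y ≤ x) :
    y ^ n * SS n x ≤ x ^ n * SS n y := by
  unfold SS
  rw [Finset.mul_sum, Finset.mul_sum]
  apply Finset.sum_le_sum
  intro k hk
  have hk' : k ≤ n := (Finset.mem_range.1 hk).le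
  have hx : 0 ≤ x := le_trans hy hxy
  calc y ^ n * x ^ k = (y^k * x^k) * y^(n-k) := by
        rw [show (y:ℝ)^n = y^k * y^(n-k) by rw [← pow_add]; congr 1; omega]; ring
  _ ≤ (y^k * x^k) * x^(n-k) := by
        apply mul_le_mul_of_nonneg_left (pow_le_pow_left₀ hy hxy _)
        positivity
  _ = x ^ n * y ^ k := by
        rw [show (x:ℝ)^n = x^k * x^(n-k) by rw [← pow_add]; congr 1; omega]; ring

/-- `SS (n+1) x * SS n y ≥ SS n x * SS (n+1) y` for `0 ≤ y ≤ x`. -/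
lemma SS_succ_cross {n : ℕ} {x y : ℝ} (hy : 0 ≤ y) (hxy : y ≤ x) :
    SS n x * SS (n+1) y ≤ SS (n+1) x * SS n y := by
  have h1 : SS (n+1) x = SS n x + x ^ n := by unfold SS; rw [Finset.sum_range_succ]
  have h2 : SS (n+1) y = SS n y + y ^ n := by unfold SS; rw [Finset.sum_range_succ]
  have h3 := SS_cross hy hxy (n := n)
  rw [h1, h2]
  nlinarith [h3]

/-! ### strategy basics -/

namespace Setup

variable {ρ c : ℝ} {m : ℕ} {pL pH : Fin m → ℝ} {top : Fin m}

lemma acc_nonneg (S : Setup ρ c pL pH top) {p σ : Fin m → ℝ} (hp : ∀ s, 0 ≤ p s)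
    (hσ : IsStrategy σ) : 0 ≤ acc p σ :=
  Finset.sum_nonneg fun s _ => mul_nonneg (hp s) (hσ s).1

lemma acc_le_sum (S : Setup ρ c pL pH top) {p σ : Fin m → ℝ} (hp : ∀ s, 0 ≤ p s)
    (hσ : IsStrategy σ) : acc p σ ≤ ∑ s, p s := by
  apply Finset.sum_le_sum
  intro s _
  nlinarith [(hσ s).1, (hσ s).2, hp s]

lemma rej_eq {p σ : Fin m → ℝ} : rej p σ = 1 - acc p σ := rfl

lemma rejL_nonneg (S : Setup ρ c pL pH top) {σ : Fin m → ℝ} (hσ : IsStrategy σ) :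
    0 ≤ rej pL σ := by
  have := S.acc_le_sum (fun s => (S.hpL s).le) hσ
  rw [S.hsL] at this
  rw [rej_eq]; linarith

lemma rejL_le_one (S : Setup ρ c pL pH top) {σ : Fin m → ℝ} (hσ : IsStrategy σ) :
    rej pL σ ≤ 1 := by
  have := S.acc_nonneg (fun s => (S.hpL s).le) hσ
  rw [rej_eq]; linarith

lemma rejH_nonneg (S : Setup ρ c pL pH top) {σ : Fin m → ℝ} (hσ : IsStrategy σ) :
    0 ≤ rej pH σ := by
  have := S.acc_le_sum S.hpH hσ
  rw [S.hsH] at this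
  rw [rej_eq]; linarith

lemma rejH_le_one (S : Setup ρ c pL pH top) {σ : Fin m → ℝ} (hσ : IsStrategy σ) :
    rej pH σ ≤ 1 := by
  have := S.acc_nonneg S.hpH hσ
  rw [rej_eq]; linarith

/-- `Bf` in terms of the likelihood ratio. -/
lemma Bf_eq (S : Setup ρ c pL pH top) (n : ℕ) (σ : Fin m → ℝ) (s : Fin m) :
    Bf ρ c n pL pH σ s
      = pL s * ((1-c)*ρ*(SS n (rej pH σ)) * lr pL pH s - c*(1-ρ)*(SS n (rej pL σ))) := by
  rw [Bf, S.pH_eq s]; ring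

/-- The equilibrium property, in division-free form. -/
lemma eq_iff (S : Setup ρ c pL pH top) {n : ℕ} (hn : 1 ≤ n) (σ : Fin m → ℝ) :
    IsEquilibrium ρ c n pL pH σ ↔
      (IsStrategy σ ∧ ∀ s, (0 < Bf ρ c n pL pH σ s → σ s = 1) ∧
        (Bf ρ c n pL pH σ s < 0 → σ s = 0)) := by
  have key : IsStrategy σ → ∀ s,
      (c < post (interim ρ n pL pH σ) pL pH s ↔ 0 < Bf ρ c n pL pH σ s) ∧
      (post (interim ρ n pL pH σ) pL pH s < c ↔ Bf ρ c n pL pH σ s < 0) := by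
    intro hσ s
    have hn0 : (0:ℝ) < n := by exact_mod_cast hn
    have hνH : 0 < visit n pH σ := by
      rw [visit]
      have := SS_pos hn (S.rejH_nonneg hσ)
      rw [SS] at this
      positivity
    have hνL : 0 < visit n pL σ := by
      rw [visit]
      have := SS_pos hn (S.rejL_nonneg hσ)
      rw [SS] at this
      positivity
    set νH := visit n pH σ with hνHdef
    set νL := visit n pL σ with hνLdef
    have hD : 0 < ρ * νH + (1-ρ) * νL := by
      have := S.hρ0; have := S.hρ1; nlinarith
    set ψ := interim ρ n pL pH σ with hψdef
    have hψ_eq : ψ = ρ * νH / (ρ * νH + (1-ρ) * νL) := rfl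
    have hψ0 : 0 < ψ := by
      rw [hψ_eq]
      have := S.hρ0
      positivity
    have h1ψ : 1 - ψ = (1-ρ) * νL / (ρ * νH + (1-ρ) * νL) := by
      rw [hψ_eq]
      field_simp
      ring
    have h1ψ0 : 0 < 1 - ψ := by
      rw [h1ψ]
      have h1 : 0 < (1-ρ) * νL := by have := S.hρ1; nlinarith
      positivity
    have hden : 0 < ψ * pH s + (1-ψ) * pL s := by
      have h1 : 0 ≤ ψ * pH s := mul_nonneg hψ0.le (S.hpH s)
      have h2 : 0 < (1-ψ) * pL s := mul_pos h1ψ0 (S.hpL s)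
      linarith
    -- post - c has the same sign as Bf
    have hBf : Bf ρ c n pL pH σ s
        = ((1-c) * (ψ * pH s) - c * ((1-ψ) * pL s)) * (n * (ρ * νH + (1-ρ) * νL)) := by
      have eνH : SS n (rej pH σ) = n * νH := by
        rw [hνHdef, visit, SS]
        field_simp
      have eνL : SS n (rej pL σ) = n * νL := by
        rw [hνLdef, visit, SS]
        field_simp
      rw [Bf, eνH, eνL, h1ψ, hψ_eq]
      field_simp
    have hpost : post ψ pL pH s - c
        = ((1-c) * (ψ * pH s) - c * ((1-ψ) * pL s)) / (ψ * pH s + (1-ψ) * pL s) := by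
      rw [post]
      field_simp
      ring
    have hND : 0 < (n:ℝ) * (ρ * νH + (1-ρ) * νL) := by positivity
    constructor
    · constructor
      · intro h
        have h2 : 0 < post ψ pL pH s - c := by linarith
        rw [hpost] at h2
        have h3 : 0 < (1-c) * (ψ * pH s) - c * ((1-ψ) * pL s) :=
          (div_pos_iff_of_pos_right hden).1 h2
        rw [hBf]
        exact mul_pos h3 hND
      · intro h
        rw [hBf] at h
        have h3 : 0 < (1-c) * (ψ * pH s) - c * ((1-ψ) * pL s) := by
          by_contra hcon
          push_neg at hcon
          nlinarith [mul_nonneg (neg_nonneg.mpr hcon) hND.le]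
        have h4 : 0 < post ψ pL pH s - c := by
          rw [hpost]
          positivity
        linarith
    · constructor
      · intro h
        have h2 : post ψ pL pH s - c < 0 := by linarith
        rw [hpost] at h2
        have h3 : (1-c) * (ψ * pH s) - c * ((1-ψ) * pL s) < 0 := by
          by_contra hcon
          push_neg at hcon
          have : 0 ≤ ((1-c) * (ψ * pH s) - c * ((1-ψ) * pL s)) / (ψ * pH s + (1-ψ) * pL s) :=
            div_nonneg hcon hden.le
          linarith
        rw [hBf]
        exact mul_neg_of_neg_of_pos h3 hND
      · intro h
        rw [hBf] at h
        have h3 : (1-c) * (ψ * pH s) - c * ((1-ψ) * pL s) < 0 := by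
          by_contra hcon
          push_neg at hcon
          nlinarith [mul_nonneg hcon hND.le]
        have h4 : post ψ pL pH s - c < 0 := by
          rw [hpost]
          apply div_neg_of_neg_of_pos h3 hden
        linarith
  constructor
  · rintro ⟨hσ, h⟩
    refine ⟨hσ, fun s => ⟨fun hb => (h s).1 ((key hσ s).1.2 hb),
      fun hb => (h s).2 ((key hσ s).2.2 hb)⟩⟩
  · rintro ⟨hσ, h⟩
    refine ⟨hσ, fun s => ⟨fun hb => (h s).1 ((key hσ s).1.1 hb),
      fun hb => (h s).2 ((key hσ s).2.1 hb)⟩⟩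

end Setup

/-! ### surplus identities, equilibrium structure -/

namespace Setup

variable {ρ c : ℝ} {m : ℕ} {pL pH : Fin m → ℝ} {top : Fin m}

lemma surplus_eq_sum (S : Setup ρ c pL pH top) (n : ℕ) (σ : Fin m → ℝ) :
    surplus ρ c n pL pH σ = ∑ s, σ s * Bf ρ c n pL pH σ s := by
  have key : ∀ X Y : ℝ, ∑ s, σ s * (X * pH s - Y * pL s)
      = X * (1 - rej pH σ) - Y * (1 - rej pL σ) := by
    intro X Y
    have h : ∑ s, σ s * (X * pH s - Y * pL s)
        = X * (∑ s, pH s * σ s) - Y * (∑ s, pL s * σ s) := by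
      rw [Finset.mul_sum, Finset.mul_sum, ← Finset.sum_sub_distrib]
      apply Finset.sum_congr rfl
      intro s _
      ring
    rw [h, rej, rej]
    ring
  have hH := SS_mul_one_sub n (rej pH σ)
  have hL := SS_mul_one_sub n (rej pL σ)
  unfold Bf
  rw [key]
  unfold surplus
  linear_combination (-((1-c)*ρ))*hH + (c*(1-ρ))*hL

lemma surplus_nonneg (S : Setup ρ c pL pH top) {n : ℕ} (hn : 1 ≤ n) {σ : Fin m → ℝ}
    (he : IsEquilibrium ρ c n pL pH σ) : 0 ≤ surplus ρ c n pL pH σ := by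
  obtain ⟨hσ, hB⟩ := (S.eq_iff hn σ).1 he
  rw [S.surplus_eq_sum n σ]
  apply Finset.sum_nonneg
  intro s _
  by_cases h : Bf ρ c n pL pH σ s < 0
  · rw [(hB s).2 h]
    simp
  · push_neg at h
    exact mul_nonneg (hσ s).1 h

lemma acc_mono (S : Setup ρ c pL pH top) {n : ℕ} (hn : 1 ≤ n) {σ : Fin m → ℝ}
    (he : IsEquilibrium ρ c n pL pH σ) : acc pL σ ≤ acc pH σ := by
  obtain ⟨hσ, hB⟩ := (S.eq_iff hn σ).1 he
  have hSH : 0 < SS n (rej pH σ) := SS_pos hn (S.rejH_nonneg hσ)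
  have hSL : 0 < SS n (rej pL σ) := SS_pos hn (S.rejL_nonneg hσ)
  have hal := S.al_pos
  have hbe := S.be_pos
  have hsum : ∑ s, (pH s - pL s) = 0 := by
    rw [Finset.sum_sub_distrib, S.hsL, S.hsH]
    ring
  have goal' : 0 ≤ ∑ s, (pH s - pL s) * σ s := by
    rcases le_or_gt (c*(1-ρ) * SS n (rej pL σ)) ((1-c)*ρ * SS n (rej pH σ)) with hcase | hcase
    · have h1 : ∀ s, pL s < pH s → σ s = 1 := by
        intro s hs
        apply (hB s).1
        unfold Bf
        have k1 : c*(1-ρ) * SS n (rej pL σ) * pL s ≤ (1-c)*ρ * SS n (rej pH σ) * pL s :=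
          mul_le_mul_of_nonneg_right hcase (S.hpL s).le
        have k2 : 0 < (1-c)*ρ * SS n (rej pH σ) * (pH s - pL s) :=
          mul_pos (mul_pos hal hSH) (sub_pos.2 hs)
        nlinarith [k1, k2]
      calc (0:ℝ) = ∑ s, (pH s - pL s) := hsum.symm
      _ ≤ ∑ s, (pH s - pL s) * σ s := by
          apply Finset.sum_le_sum
          intro s _
          by_cases hs : pL s < pH s
          · rw [h1 s hs]; ring_nf; exact le_refl _
          · push_neg at hs
            nlinarith [(hσ s).2]
    · have h1 : ∀ s, pH s < pL s → σ s = 0 := by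
        intro s hs
        apply (hB s).2
        unfold Bf
        have k1 : (1-c)*ρ * SS n (rej pH σ) * pH s ≤ c*(1-ρ) * SS n (rej pL σ) * pH s :=
          mul_le_mul_of_nonneg_right hcase.le (S.hpH s)
        have k2 : 0 < c*(1-ρ) * SS n (rej pL σ) * (pL s - pH s) :=
          mul_pos (mul_pos hbe hSL) (sub_pos.2 hs)
        nlinarith [k1, k2]
      apply Finset.sum_nonneg
      intro s _
      by_cases hs : pH s < pL s
      · rw [h1 s hs]; ring_nf; exact le_refl _
      · push_neg at hs
        have := (hσ s).1
        nlinarith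
  have : ∑ s, (pH s - pL s) * σ s = acc pH σ - acc pL σ := by
    unfold acc
    rw [← Finset.sum_sub_distrib]
    apply Finset.sum_congr rfl
    intro s _
    ring
  linarith [goal'.trans_eq this]

lemma acc_le_ltop_mul (S : Setup ρ c pL pH top) {σ : Fin m → ℝ} (hσ : IsStrategy σ) :
    acc pH σ ≤ lr pL pH top * acc pL σ := by
  unfold acc
  rw [Finset.mul_sum]
  apply Finset.sum_le_sum
  intro s _
  rw [S.pH_eq s]
  have h1 : lr pL pH s ≤ lr pL pH top := S.hltop s
  have h2 := S.hpL s
  have h3 := (hσ s).1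
  nlinarith [mul_nonneg (mul_nonneg h2.le h3) (sub_nonneg.2 h1)]

/-- the central strict inequality: the bracket at the top likelihood ratio is positive -/
lemma gPos (S : Setup ρ c pL pH top) {n : ℕ} (hn : 1 ≤ n) {σ : Fin m → ℝ}
    (hσ : IsStrategy σ) (hb : 0 < acc pL σ) (hab : acc pL σ ≤ acc pH σ)
    (hba : acc pH σ ≤ lr pL pH top * acc pL σ)
    (hcρ : c ≤ ρ) (hKD : c*(1-ρ) < (1-c)*ρ * lr pL pH top) :
    c*(1-ρ) * SS n (rej pL σ) < (1-c)*ρ * SS n (rej pH σ) * lr pL pH top := by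
  have hSH : 0 < SS n (rej pH σ) := SS_pos hn (S.rejH_nonneg hσ)
  have hSL : 0 < SS n (rej pL σ) := SS_pos hn (S.rejL_nonneg hσ)
  have hal := S.al_pos
  have hbe := S.be_pos
  have halbe : c*(1-ρ) ≤ (1-c)*ρ := by nlinarith
  rcases eq_or_lt_of_le hab with heq | hlt
  · have hre : rej pH σ = rej pL σ := by
      rw [rej_eq, rej_eq, heq]
    rw [hre]
    nlinarith
  · -- acc pL σ < acc pH σ
    have hrH0 : 0 ≤ rej pH σ := S.rejH_nonneg hσ
    have hrr : rej pH σ < rej pL σ := by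
      rw [rej_eq, rej_eq]; linarith
    have hpow : rej pH σ ^ n < rej pL σ ^ n :=
      pow_lt_pow_left₀ hrr hrH0 (by omega)
    have hH := SS_mul_one_sub n (rej pH σ)
    have hL := SS_mul_one_sub n (rej pL σ)
    -- acc pL σ * SL = 1 - rL^n < 1 - rH^n = acc pH σ * SH
    have key : acc pL σ * SS n (rej pL σ) < acc pH σ * SS n (rej pH σ) := by
      have e1 : acc pH σ * SS n (rej pH σ) = 1 - rej pH σ ^ n := by
        rw [rej_eq] at hH ⊢
        nlinarith [hH]
      have e2 : acc pL σ * SS n (rej pL σ) = 1 - rej pL σ ^ n := by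
        rw [rej_eq] at hL ⊢
        nlinarith [hL]
      rw [e1, e2]
      linarith
    have h1 : acc pH σ * SS n (rej pH σ) ≤ lr pL pH top * acc pL σ * SS n (rej pH σ) :=
      mul_le_mul_of_nonneg_right hba hSH.le
    have h2 : acc pL σ * SS n (rej pL σ) < acc pL σ * (lr pL pH top * SS n (rej pH σ)) := by
      calc acc pL σ * SS n (rej pL σ) < acc pH σ * SS n (rej pH σ) := key
      _ ≤ lr pL pH top * acc pL σ * SS n (rej pH σ) := h1
      _ = acc pL σ * (lr pL pH top * SS n (rej pH σ)) := by ring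
    have h3 : SS n (rej pL σ) < lr pL pH top * SS n (rej pH σ) :=
      lt_of_mul_lt_mul_left h2 hb.le
    nlinarith

/-- every equilibrium accepts for sure on the whole top likelihood-ratio class -/
lemma topAccept (S : Setup ρ c pL pH top) {n : ℕ} (hn : 1 ≤ n)
    (hcρ : c ≤ ρ) (hKD : c*(1-ρ) < (1-c)*ρ * lr pL pH top) {σ : Fin m → ℝ}
    (he : IsEquilibrium ρ c n pL pH σ) :
    ∀ s, lr pL pH s = lr pL pH top → σ s = 1 := by
  obtain ⟨hσ, hB⟩ := (S.eq_iff hn σ).1 he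
  intro s hs
  suffices h : c*(1-ρ) * SS n (rej pL σ) < (1-c)*ρ * SS n (rej pH σ) * lr pL pH top by
    apply (hB s).1
    rw [S.Bf_eq, hs]
    nlinarith [S.hpL s]
  have hb0 : 0 ≤ acc pL σ := S.acc_nonneg (fun s => (S.hpL s).le) hσ
  rcases hb0.eq_or_lt with hb | hb
  · -- σ ≡ 0
    have hzero : ∀ t, σ t = 0 := by
      intro t
      have h0 : ∀ t ∈ Finset.univ, 0 ≤ pL t * σ t :=
        fun t _ => mul_nonneg (S.hpL t).le (hσ t).1
      have := (Finset.sum_eq_zero_iff_of_nonneg h0).1 hb.symm t (Finset.mem_univ t)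
      have hpl := S.hpL t
      nlinarith
    have haccH : acc pH σ = 0 := by
      unfold acc
      apply Finset.sum_eq_zero
      intro t _
      rw [hzero t]
      ring
    have haccL : acc pL σ = 0 := hb.symm
    have hre : rej pH σ = rej pL σ := by
      rw [rej_eq, rej_eq, haccH, haccL]
    rw [hre]
    have hSL : 0 < SS n (rej pL σ) := SS_pos hn (S.rejL_nonneg hσ)
    nlinarith
  · exact S.gPos hn hσ hb (S.acc_mono hn he) (S.acc_le_ltop_mul hσ) hcρ hKD

end Setup

/-! ### the key comparison lemma ("Lemma R") -/

lemma pow_sub_pow_le_aux {γ x y : ℝ} (n : ℕ) (hy : 0 ≤ y) (hxy : y ≤ x) (hxγ : x ≤ γ) :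
    x ^ n - y ^ n ≤ n * (x - y) * γ ^ (n - 1) := by
  have hγ0 : 0 ≤ γ := le_trans (le_trans hy hxy) hxγ
  have hgs := geom_sum₂_mul x y n
  have hsum : ∑ i ∈ Finset.range n, x ^ i * y ^ (n - 1 - i) ≤ n * γ ^ (n-1) := by
    calc ∑ i ∈ Finset.range n, x ^ i * y ^ (n - 1 - i)
        ≤ ∑ _i ∈ Finset.range n, γ ^ (n-1) := by
          apply Finset.sum_le_sum
          intro i hi
          have hi' : i < n := Finset.mem_range.1 hi
          have h1 : x ^ i ≤ γ ^ i := pow_le_pow_left₀ (le_trans hy hxy) hxγ i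
          have h2 : y ^ i ≤ x ^ i := pow_le_pow_left₀ hy hxy i
          have h3 : y ^ (n-1-i) ≤ γ ^ (n-1-i) :=
            pow_le_pow_left₀ hy (le_trans hxy hxγ) _
          calc x ^ i * y ^ (n-1-i) ≤ γ ^ i * γ ^ (n-1-i) := by
                apply mul_le_mul h1 h3 (pow_nonneg hy _) (pow_nonneg hγ0 _)
          _ = γ ^ (n-1) := by
                rw [← pow_add]
                congr 1
                omega
    _ = n * γ ^ (n-1) := by rw [Finset.sum_const, Finset.card_range, nsmul_eq_mul]
  have hxy' : 0 ≤ x - y := sub_nonneg.2 hxy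
  calc x ^ n - y ^ n = (∑ i ∈ Finset.range n, x ^ i * y ^ (n - 1 - i)) * (x - y) := hgs.symm
  _ ≤ (n * γ ^ (n-1)) * (x - y) := mul_le_mul_of_nonneg_right hsum hxy'
  _ = n * (x - y) * γ ^ (n-1) := by ring

lemma lemmaR {n : ℕ} (hn : 1 ≤ n) {M lam a0 b0 a1 b1 Ggap : ℝ}
    (hM : 0 < M)
    (hb0 : M ≤ b0) (hbb : b0 ≤ b1) (hb1 : b1 ≤ 1)
    (ha0 : M ≤ a0) (haa : a0 ≤ a1) (ha1 : a1 ≤ 1)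
    (hlam : 0 ≤ lam)
    (hrel : a1 - a0 = lam * (b1 - b0))
    (hGgap : Ggap ≤ a0 - lam * b0) (hGpos : 0 < Ggap)
    (hN : (n:ℝ) * (1-M) ^ (n-1) ≤ Ggap * M^2) :
    SS n (1 - b1) * SS n (1 - a0) ≤ SS n (1 - b0) * SS n (1 - a1) := by
  set γ := 1 - M with hγdef
  have hM1 : M ≤ 1 := le_trans hb0 (le_trans hbb hb1)
  have hγ0 : 0 ≤ γ := by rw [hγdef]; linarith
  have hγ1 : γ < 1 := by rw [hγdef]; linarith
  set u0 := (1-b0)^n with hu0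
  set u1 := (1-b1)^n with hu1
  set v0 := (1-a0)^n with hv0
  set v1 := (1-a1)^n with hv1
  have hb00 : 0 < b0 := lt_of_lt_of_le hM hb0
  have hb10 : 0 < b1 := lt_of_lt_of_le hb00 hbb
  have ha00 : 0 < a0 := lt_of_lt_of_le hM ha0
  have ha10 : 0 < a1 := lt_of_lt_of_le ha00 haa
  -- basic bounds on the u's and v's
  have h1b1 : 0 ≤ 1 - b1 := by linarith
  have h1b0γ : 1 - b0 ≤ γ := by rw [hγdef]; linarith
  have h1a1 : 0 ≤ 1 - a1 := by linarith
  have h1a0γ : 1 - a0 ≤ γ := by rw [hγdef]; linarith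
  have hu1u0 : u1 ≤ u0 := pow_le_pow_left₀ h1b1 (by linarith) n
  have hv1v0 : v1 ≤ v0 := pow_le_pow_left₀ h1a1 (by linarith) n
  have hu10 : 0 ≤ u1 := pow_nonneg h1b1 n
  have hv10 : 0 ≤ v1 := pow_nonneg h1a1 n
  have hγn : γ ^ n ≤ γ := pow_le_of_le_one hγ0 hγ1.le (by omega)
  have hu0γ : u0 ≤ γ ^ n := pow_le_pow_left₀ (by linarith) h1b0γ n
  have hv0γ : v0 ≤ γ ^ n := pow_le_pow_left₀ (by linarith) h1a0γ n
  have hu0M : 1 - u0 ≥ M := by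
    have : u0 ≤ γ := le_trans hu0γ hγn
    rw [hγdef] at this; linarith
  have hv1M : 1 - v1 ≥ M := by
    have : v1 ≤ γ ^ n := le_trans hv1v0 hv0γ
    have : v1 ≤ γ := le_trans this hγn
    rw [hγdef] at this; linarith
  have hv01 : v0 ≤ 1 := le_trans hv0γ (le_trans hγn (by linarith))
  have hu01 : u0 ≤ 1 := le_trans hu0γ (le_trans hγn (by linarith))
  set Δ := b1 - b0 with hΔdef
  have hΔ : 0 ≤ Δ := sub_nonneg.2 hbb
  -- u0 - u1 ≤ n Δ γ^{n-1}
  have hud : u0 - u1 ≤ n * Δ * γ ^ (n-1) := by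
    rw [hu0, hu1]
    have := pow_sub_pow_le_aux (γ := γ) n h1b1 (by linarith : 1 - b1 ≤ 1 - b0) h1b0γ
    calc (1-b0)^n - (1-b1)^n ≤ n * ((1-b0)-(1-b1)) * γ^(n-1) := this
    _ = n * Δ * γ^(n-1) := by rw [hΔdef]; ring
  set t := (n:ℝ) * Δ * γ ^ (n-1) with htdef
  have ht0 : 0 ≤ t := by
    rw [htdef]
    have : (0:ℝ) ≤ n := Nat.cast_nonneg n
    positivity
  -- step 1: (1-u1)(1-v0) ≤ (1-u0)(1-v1) + t
  have step1 : (1-u1)*(1-v0) ≤ (1-u0)*(1-v1) + t := by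
    have s1 : (1-u1)*(1-v0) ≤ (1-u1)*(1-v1) :=
      mul_le_mul_of_nonneg_left (by linarith) (by linarith)
    have s2 : (1-u1)*(1-v1) = (1-u0)*(1-v1) + (u0-u1)*(1-v1) := by ring
    have s3 : (u0-u1)*(1-v1) ≤ (u0 - u1) := by
      nlinarith [hv10]
    have s4 : u0 - u1 ≤ t := hud
    linarith
  -- step 2: determinant bound
  have step2 : Δ * Ggap ≤ b1*a0 - b0*a1 := by
    have e : b1*a0 - b0*a1 = Δ * (a0 - lam * b0) := by
      have ha1e : a1 = a0 + lam * Δ := by linarith [hrel]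
      rw [ha1e, hΔdef]
      ring
    rw [e]
    exact mul_le_mul_of_nonneg_left hGgap hΔ
  -- step 3: the cross-multiplied inequality
  have hb01 : b0 ≤ 1 := le_trans hbb hb1
  have hba01 : b0 * a1 ≤ 1 := by
    have h := mul_le_mul hb01 ha1 (by linarith : (0:ℝ) ≤ a1) (by linarith : (0:ℝ) ≤ 1)
    linarith [h]
  have hP0 : 0 ≤ (1-u0)*(1-v1) := mul_nonneg (by linarith) (by linarith)
  have C : (1-u1)*(1-v0)*(b0*a1) ≤ (1-u0)*(1-v1)*(b1*a0) := by
    have c1 : (1-u1)*(1-v0)*(b0*a1) ≤ ((1-u0)*(1-v1) + t)*(b0*a1) :=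
      mul_le_mul_of_nonneg_right step1 (by positivity)
    have c2 : ((1-u0)*(1-v1) + t)*(b0*a1) = (1-u0)*(1-v1)*(b0*a1) + t*(b0*a1) := by ring
    have c3 : t*(b0*a1) ≤ t := by
      calc t*(b0*a1) ≤ t*1 := mul_le_mul_of_nonneg_left hba01 ht0
      _ = t := mul_one t
    have c4 : t ≤ Δ * (Ggap * M^2) := by
      rw [htdef]
      calc (n:ℝ) * Δ * γ^(n-1) = Δ * ((n:ℝ) * γ^(n-1)) := by ring
      _ ≤ Δ * (Ggap * M^2) := mul_le_mul_of_nonneg_left hN hΔ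
    have hMP : M^2 ≤ (1-u0)*(1-v1) := by
      rw [pow_two]
      exact mul_le_mul hu0M hv1M hM.le (by linarith)
    have c5 : Δ * (Ggap * M^2) ≤ Δ * Ggap * ((1-u0)*(1-v1)) := by
      calc Δ * (Ggap * M^2) = (Δ * Ggap) * M^2 := by ring
      _ ≤ (Δ * Ggap) * ((1-u0)*(1-v1)) :=
          mul_le_mul_of_nonneg_left hMP (mul_nonneg hΔ hGpos.le)
      _ = Δ * Ggap * ((1-u0)*(1-v1)) := by ring
    have c6 : (1-u0)*(1-v1)*(b0*a1) + Δ * Ggap * ((1-u0)*(1-v1)) ≤ (1-u0)*(1-v1)*(b1*a0) := by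
      calc (1-u0)*(1-v1)*(b0*a1) + Δ * Ggap * ((1-u0)*(1-v1))
          = (1-u0)*(1-v1)*(b0*a1 + Δ*Ggap) := by ring
      _ ≤ (1-u0)*(1-v1)*(b1*a0) := mul_le_mul_of_nonneg_left (by linarith) hP0
    linarith [c1, c2, c3, c4, c5, c6]
  -- step 4: translate back to the geometric sums
  have hb1S : SS n (1-b1) * b1 = 1 - u1 := by
    have h := SS_mul_one_sub n (1-b1)
    rw [hu1]
    linear_combination h
  have ha0S : SS n (1-a0) * a0 = 1 - v0 := by
    have h := SS_mul_one_sub n (1-a0)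
    rw [hv0]
    linear_combination h
  have hb0S : SS n (1-b0) * b0 = 1 - u0 := by
    have h := SS_mul_one_sub n (1-b0)
    rw [hu0]
    linear_combination h
  have ha1S : SS n (1-a1) * a1 = 1 - v1 := by
    have h := SS_mul_one_sub n (1-a1)
    rw [hv1]
    linear_combination h
  have hq : (0:ℝ) < b1*a0*(b0*a1) := by positivity
  have step : SS n (1-b1) * SS n (1-a0) * (b1*a0*(b0*a1))
      ≤ SS n (1-b0) * SS n (1-a1) * (b1*a0*(b0*a1)) := by
    calc SS n (1-b1) * SS n (1-a0) * (b1*a0*(b0*a1))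
        = (SS n (1-b1) * b1) * (SS n (1-a0) * a0) * (b0*a1) := by ring
    _ = (1-u1)*(1-v0)*(b0*a1) := by rw [hb1S, ha0S]
    _ ≤ (1-u0)*(1-v1)*(b1*a0) := C
    _ = (SS n (1-b0) * b0) * (SS n (1-a1) * a1) * (b1*a0) := by rw [hb0S, ha1S]
    _ = SS n (1-b0) * SS n (1-a1) * (b1*a0*(b0*a1)) := by ring
  exact le_of_mul_le_mul_right step hq

/-! ### pure threshold strategies -/

open Finset

/-- strategy accepting all signals with likelihood ratio strictly above `lam` -/
def pureGT {m : ℕ} (pL pH : Fin m → ℝ) (lam : ℝ) : Fin m → ℝ :=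
  fun s => if lam < lr pL pH s then 1 else 0

/-- strategy accepting all signals with likelihood ratio at least `lam` -/
def pureGE {m : ℕ} (pL pH : Fin m → ℝ) (lam : ℝ) : Fin m → ℝ :=
  fun s => if lam ≤ lr pL pH s then 1 else 0

/-- total `pL`-mass of the top likelihood-ratio class -/
def Mtop {m : ℕ} (pL pH : Fin m → ℝ) (top : Fin m) : ℝ :=
  ∑ s ∈ Finset.univ.filter (fun s => lr pL pH s = lr pL pH top), pL s

lemma pureGT_strategy {m : ℕ} (pL pH : Fin m → ℝ) (lam : ℝ) : IsStrategy (pureGT pL pH lam) := by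
  intro s
  unfold pureGT
  by_cases h : lam < lr pL pH s <;> simp [h]

lemma pureGE_strategy {m : ℕ} (pL pH : Fin m → ℝ) (lam : ℝ) : IsStrategy (pureGE pL pH lam) := by
  intro s
  unfold pureGE
  by_cases h : lam ≤ lr pL pH s <;> simp [h]

lemma acc_pureGT {m : ℕ} (p pL pH : Fin m → ℝ) (lam : ℝ) :
    acc p (pureGT pL pH lam) = ∑ s ∈ Finset.univ.filter (fun s => lam < lr pL pH s), p s := by
  unfold acc pureGT
  rw [Finset.sum_filter]
  apply Finset.sum_congr rfl
  intro s _
  by_cases h : lam < lr pL pH s <;> simp [h]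

lemma acc_pureGE {m : ℕ} (p pL pH : Fin m → ℝ) (lam : ℝ) :
    acc p (pureGE pL pH lam) = ∑ s ∈ Finset.univ.filter (fun s => lam ≤ lr pL pH s), p s := by
  unfold acc pureGE
  rw [Finset.sum_filter]
  apply Finset.sum_congr rfl
  intro s _
  by_cases h : lam ≤ lr pL pH s <;> simp [h]

namespace Setup

variable {ρ c : ℝ} {m : ℕ} {pL pH : Fin m → ℝ} {top : Fin m}

/-- sum of pH - pL over an "upper" filter is nonnegative -/
lemma filter_sum_nonneg (S : Setup ρ c pL pH top) (P : Fin m → Prop) [DecidablePred P]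
    (hP : (∀ s, P s → 1 ≤ lr pL pH s) ∨ (∀ s, ¬ P s → lr pL pH s ≤ 1)) :
    0 ≤ ∑ s ∈ Finset.univ.filter P, (pH s - pL s) := by
  rcases hP with hP | hP
  · apply Finset.sum_nonneg
    intro s hs
    have hPs : P s := (Finset.mem_filter.1 hs).2
    have h1 : 1 ≤ lr pL pH s := hP s hPs
    have h2 := S.hpL s
    have := S.pH_eq s
    nlinarith
  · have hsplit := Finset.sum_filter_add_sum_filter_not Finset.univ P (fun s => pH s - pL s)
    have hzero : ∑ s, (pH s - pL s) = 0 := by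
      rw [Finset.sum_sub_distrib, S.hsL, S.hsH]; ring
    have hneg : ∑ s ∈ Finset.univ.filter (fun s => ¬ P s), (pH s - pL s) ≤ 0 := by
      apply Finset.sum_nonpos
      intro s hs
      have hPs : ¬ P s := (Finset.mem_filter.1 hs).2
      have h1 : lr pL pH s ≤ 1 := hP s hPs
      have h2 := S.hpL s
      have := S.pH_eq s
      nlinarith
    linarith [hsplit, hzero, hneg]

lemma acc_mono_pureGT (S : Setup ρ c pL pH top) (lam : ℝ) :
    acc pL (pureGT pL pH lam) ≤ acc pH (pureGT pL pH lam) := by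
  rw [acc_pureGT, acc_pureGT]
  have h := S.filter_sum_nonneg (fun s => lam < lr pL pH s) ?_
  · rw [Finset.sum_sub_distrib] at h
    linarith
  · rcases le_or_gt 1 lam with h1 | h1
    · exact Or.inl (fun s hs => le_of_lt (lt_of_le_of_lt h1 hs))
    · right
      intro s hs
      push_neg at hs
      linarith
lemma acc_mono_pureGE (S : Setup ρ c pL pH top) (lam : ℝ) :
    acc pL (pureGE pL pH lam) ≤ acc pH (pureGE pL pH lam) := by
  rw [acc_pureGE, acc_pureGE]
  have h := S.filter_sum_nonneg (fun s => lam ≤ lr pL pH s) ?_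
  · rw [Finset.sum_sub_distrib] at h
    linarith
  · rcases le_or_gt 1 lam with h1 | h1
    · exact Or.inl (fun s hs => le_trans h1 hs)
    · right
      intro s hs
      push_neg at hs
      linarith

lemma Mtop_pos (S : Setup ρ c pL pH top) : 0 < Mtop pL pH top := by
  unfold Mtop
  have hmem : top ∈ Finset.univ.filter (fun s => lr pL pH s = lr pL pH top) := by
    simp
  calc (0:ℝ) < pL top := S.hpL top
  _ ≤ _ := Finset.single_le_sum (fun s _ => (S.hpL s).le) hmem

lemma Mtop_le_one (S : Setup ρ c pL pH top) : Mtop pL pH top ≤ 1 := by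
  unfold Mtop
  calc ∑ s ∈ Finset.univ.filter (fun s => lr pL pH s = lr pL pH top), pL s
      ≤ ∑ s, pL s := Finset.sum_le_sum_of_subset_of_nonneg (Finset.filter_subset _ _)
        (fun s _ _ => (S.hpL s).le)
  _ = 1 := S.hsL

lemma acc_le_one_L (S : Setup ρ c pL pH top) {σ : Fin m → ℝ} (hσ : IsStrategy σ) :
    acc pL σ ≤ 1 := by
  have := S.acc_le_sum (fun s => (S.hpL s).le) hσ
  rw [S.hsL] at this; exact this

lemma acc_le_one_H (S : Setup ρ c pL pH top) {σ : Fin m → ℝ} (hσ : IsStrategy σ) :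
    acc pH σ ≤ 1 := by
  have := S.acc_le_sum S.hpH hσ
  rw [S.hsH] at this; exact this

/-- a strategy accepting the whole top class has `pL`-acceptance at least `Mtop` -/
lemma Mtop_le_accL (S : Setup ρ c pL pH top) {σ : Fin m → ℝ} (hσ : IsStrategy σ)
    (htop1 : ∀ s, lr pL pH s = lr pL pH top → σ s = 1) :
    Mtop pL pH top ≤ acc pL σ := by
  unfold Mtop acc
  rw [← Finset.sum_filter_add_sum_filter_not Finset.univ
      (fun s => lr pL pH s = lr pL pH top) (fun s => pL s * σ s)]
  have h1 : ∑ s ∈ Finset.univ.filter (fun s => lr pL pH s = lr pL pH top), pL s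
      = ∑ s ∈ Finset.univ.filter (fun s => lr pL pH s = lr pL pH top), pL s * σ s := by
    apply Finset.sum_congr rfl
    intro s hs
    rw [htop1 s (Finset.mem_filter.1 hs).2, mul_one]
  rw [← h1]
  have h2 : 0 ≤ ∑ s ∈ Finset.univ.filter (fun s => ¬ lr pL pH s = lr pL pH top), pL s * σ s :=
    Finset.sum_nonneg fun s _ => mul_nonneg (S.hpL s).le (hσ s).1
  linarith

lemma Mtop_le_accH (S : Setup ρ c pL pH top) {σ : Fin m → ℝ} (hσ : IsStrategy σ)
    (htop1 : ∀ s, lr pL pH s = lr pL pH top → σ s = 1) :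
    Mtop pL pH top ≤ acc pH σ := by
  have h1 : Mtop pL pH top ≤ ∑ s ∈ Finset.univ.filter
      (fun s => lr pL pH s = lr pL pH top), pH s * σ s := by
    unfold Mtop
    apply Finset.sum_le_sum
    intro s hs
    have he : lr pL pH s = lr pL pH top := (Finset.mem_filter.1 hs).2
    rw [htop1 s he, mul_one, S.pH_eq s, he]
    have := S.one_le_ltop
    have := S.hpL s
    nlinarith
  have h2 : 0 ≤ ∑ s ∈ Finset.univ.filter
      (fun s => ¬ lr pL pH s = lr pL pH top), pH s * σ s :=
    Finset.sum_nonneg fun s _ => mul_nonneg (S.hpH s) (hσ s).1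
  unfold acc
  rw [← Finset.sum_filter_add_sum_filter_not Finset.univ
      (fun s => lr pL pH s = lr pL pH top) (fun s => pH s * σ s)]
  linarith

/-- key gap estimate: for strategies supported above `lam0` that accept the top class. -/
lemma gap_bound (S : Setup ρ c pL pH top) {σ : Fin m → ℝ} (hσ : IsStrategy σ) {lam0 : ℝ}
    (hl0 : 0 ≤ lam0)
    (hsupp : ∀ s, 0 < σ s → lam0 ≤ lr pL pH s)
    (htop1 : ∀ s, lr pL pH s = lr pL pH top → σ s = 1) :
    Mtop pL pH top * (lr pL pH top - lam0) ≤ acc pH σ - lam0 * acc pL σ := by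
  have key : acc pH σ - lam0 * acc pL σ = ∑ s, pL s * (lr pL pH s - lam0) * σ s := by
    unfold acc
    rw [Finset.mul_sum, ← Finset.sum_sub_distrib]
    apply Finset.sum_congr rfl
    intro s _
    rw [S.pH_eq s]
    ring
  rw [key]
  rw [← Finset.sum_filter_add_sum_filter_not Finset.univ
      (fun s => lr pL pH s = lr pL pH top) (fun s => pL s * (lr pL pH s - lam0) * σ s)]
  have h1 : Mtop pL pH top * (lr pL pH top - lam0)
      = ∑ s ∈ Finset.univ.filter (fun s => lr pL pH s = lr pL pH top),
          pL s * (lr pL pH s - lam0) * σ s := by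
    unfold Mtop
    rw [Finset.sum_mul]
    apply Finset.sum_congr rfl
    intro s hs
    have he : lr pL pH s = lr pL pH top := (Finset.mem_filter.1 hs).2
    rw [htop1 s he, he]
    ring
  have h2 : 0 ≤ ∑ s ∈ Finset.univ.filter
      (fun s => ¬ lr pL pH s = lr pL pH top), pL s * (lr pL pH s - lam0) * σ s := by
    apply Finset.sum_nonneg
    intro s _
    rcases (hσ s).1.eq_or_lt with h | h
    · rw [← h]; ring_nf; exact le_refl _
    · have hlr := hsupp s h
      have hpl := S.hpL s
      exact mul_nonneg (mul_nonneg hpl.le (by linarith)) h.le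
  linarith [h1, h2]

end Setup

/-! ### applying the comparison lemma to threshold strategies -/

/-- the inductive condition: at `pureGT lam`, the bracket at `lam` is nonpositive -/
def C1cond (ρ c : ℝ) (n : ℕ) {m : ℕ} (pL pH : Fin m → ℝ) (lam : ℝ) : Prop :=
  (1-c)*ρ * SS n (rej pH (pureGT pL pH lam)) * lam ≤ c*(1-ρ) * SS n (rej pL (pureGT pL pH lam))

/-- `n` is large enough for the comparison lemma at every non-top threshold -/
def HNcond (n : ℕ) {m : ℕ} (pL pH : Fin m → ℝ) (top : Fin m) : Prop :=
  ∀ s, lr pL pH s < lr pL pH top →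
    (n:ℝ) * (1 - Mtop pL pH top)^(n-1)
      ≤ (Mtop pL pH top * (lr pL pH top - lr pL pH s)) * (Mtop pL pH top)^2

namespace Setup

variable {ρ c : ℝ} {m : ℕ} {pL pH : Fin m → ℝ} {top : Fin m}

lemma rej_acc {p σ : Fin m → ℝ} : rej p σ = 1 - acc p σ := rfl

lemma lemmaR_apply (S : Setup ρ c pL pH top) {n : ℕ} (hn : 1 ≤ n)
    (hHN : HNcond n pL pH top) {lam0 : ℝ} {t0 : Fin m} (hwit : lr pL pH t0 = lam0)
    (hlt : lam0 < lr pL pH top) {σ1 : Fin m → ℝ} (hσ1 : IsStrategy σ1)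
    (h_up : ∀ s, lam0 < lr pL pH s → σ1 s = 1)
    (h_dn : ∀ s, lr pL pH s < lam0 → σ1 s = 0) :
    SS n (rej pL σ1) * SS n (rej pH (pureGT pL pH lam0))
      ≤ SS n (rej pL (pureGT pL pH lam0)) * SS n (rej pH σ1) := by
  set σ0 := pureGT pL pH lam0 with hσ0def
  have hσ0 : IsStrategy σ0 := pureGT_strategy pL pH lam0
  have hl0 : 0 ≤ lam0 := hwit ▸ S.lr_nonneg t0
  have htop1 : ∀ s, lr pL pH s = lr pL pH top → σ0 s = 1 := by
    intro s hs
    rw [hσ0def]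
    unfold pureGT
    rw [if_pos (hs ▸ hlt)]
  have hσ01 : ∀ s, σ0 s ≤ σ1 s := by
    intro s
    rw [hσ0def]
    unfold pureGT
    by_cases h : lam0 < lr pL pH s
    · rw [if_pos h, h_up s h]
    · rw [if_neg h]
      exact (hσ1 s).1
  set M := Mtop pL pH top with hMdef
  have hM : 0 < M := S.Mtop_pos
  have hb0 : M ≤ acc pL σ0 := S.Mtop_le_accL hσ0 htop1
  have ha0 : M ≤ acc pH σ0 := S.Mtop_le_accH hσ0 htop1
  have hbb : acc pL σ0 ≤ acc pL σ1 :=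
    Finset.sum_le_sum fun s _ => mul_le_mul_of_nonneg_left (hσ01 s) (S.hpL s).le
  have haa : acc pH σ0 ≤ acc pH σ1 :=
    Finset.sum_le_sum fun s _ => mul_le_mul_of_nonneg_left (hσ01 s) (S.hpH s)
  have hb1 : acc pL σ1 ≤ 1 := S.acc_le_one_L hσ1
  have ha1 : acc pH σ1 ≤ 1 := S.acc_le_one_H hσ1
  -- the difference is carried by the class at lam0
  have hdiff : ∀ p : Fin m → ℝ,
      acc p σ1 - acc p σ0 = ∑ s ∈ Finset.univ.filter (fun s => lr pL pH s = lam0),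
        p s * σ1 s := by
    intro p
    have h1 : acc p σ1 - acc p σ0 = ∑ s, p s * (σ1 s - σ0 s) := by
      unfold acc
      rw [← Finset.sum_sub_distrib]
      apply Finset.sum_congr rfl
      intro s _
      ring
    rw [h1, ← Finset.sum_filter_add_sum_filter_not Finset.univ
        (fun s => lr pL pH s = lam0) (fun s => p s * (σ1 s - σ0 s))]
    have h2 : ∑ s ∈ Finset.univ.filter (fun s => ¬ lr pL pH s = lam0),
        p s * (σ1 s - σ0 s) = 0 := by
      apply Finset.sum_eq_zero
      intro s hs
      have hne : ¬ lr pL pH s = lam0 := (Finset.mem_filter.1 hs).2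
      rcases lt_trichotomy (lr pL pH s) lam0 with h | h | h
      · rw [h_dn s h, hσ0def]
        unfold pureGT
        rw [if_neg (by linarith)]
        ring
      · exact absurd h hne
      · rw [h_up s h, hσ0def]
        unfold pureGT
        rw [if_pos h]
        ring
    have h3 : ∑ s ∈ Finset.univ.filter (fun s => lr pL pH s = lam0),
        p s * (σ1 s - σ0 s) = ∑ s ∈ Finset.univ.filter (fun s => lr pL pH s = lam0),
        p s * σ1 s := by
      apply Finset.sum_congr rfl
      intro s hs
      have heq : lr pL pH s = lam0 := (Finset.mem_filter.1 hs).2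
      have : σ0 s = 0 := by
        rw [hσ0def]
        unfold pureGT
        rw [if_neg (by rw [heq]; exact lt_irrefl _)]
      rw [this]
      ring
    rw [h3] at *
    linarith [h2]
  have hrel : acc pH σ1 - acc pH σ0 = lam0 * (acc pL σ1 - acc pL σ0) := by
    rw [hdiff pH, hdiff pL, Finset.mul_sum]
    apply Finset.sum_congr rfl
    intro s hs
    have heq : lr pL pH s = lam0 := (Finset.mem_filter.1 hs).2
    rw [S.pH_eq s, heq]
    ring
  have hGgap : M * (lr pL pH top - lam0) ≤ acc pH σ0 - lam0 * acc pL σ0 := by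
    rw [hMdef]
    apply S.gap_bound hσ0 hl0 _ htop1
    intro s hpos
    by_contra hcon
    push_neg at hcon
    have : σ0 s = 0 := by
      rw [hσ0def]; unfold pureGT; rw [if_neg (by linarith)]
    rw [this] at hpos
    exact lt_irrefl _ hpos
  have hGpos : 0 < M * (lr pL pH top - lam0) := mul_pos hM (by linarith)
  have hN : (n:ℝ) * (1 - M)^(n-1) ≤ (M * (lr pL pH top - lam0)) * M^2 := by
    have := hHN t0 (hwit ▸ hlt)
    rw [hwit] at this
    exact this
  have main := MB.lemmaR hn hM hb0 hbb hb1 ha0 haa ha1 hl0 hrel hGgap hGpos hN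
  have e1 : rej pL σ1 = 1 - acc pL σ1 := rfl
  have e2 : rej pH σ0 = 1 - acc pH σ0 := rfl
  have e3 : rej pL σ0 = 1 - acc pL σ0 := rfl
  have e4 : rej pH σ1 = 1 - acc pH σ1 := rfl
  rw [e1, e2, e3, e4]
  exact main

end Setup

/-! ### the ascent to a pure equilibrium, and purity of the most selective equilibrium -/

namespace Setup

variable {ρ c : ℝ} {m : ℕ} {pL pH : Fin m → ℝ} {top : Fin m}

lemma gPos_pureGT (S : Setup ρ c pL pH top) {n : ℕ} (hn : 1 ≤ n) (hcρ : c ≤ ρ)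
    (hKD : c*(1-ρ) < (1-c)*ρ * lr pL pH top) {lam : ℝ} (hlt : lam < lr pL pH top) :
    c*(1-ρ) * SS n (rej pL (pureGT pL pH lam))
      < (1-c)*ρ * SS n (rej pH (pureGT pL pH lam)) * lr pL pH top := by
  have hσ0 := pureGT_strategy pL pH lam
  have htop1 : ∀ s, lr pL pH s = lr pL pH top → pureGT pL pH lam s = 1 := by
    intro s hs
    unfold pureGT
    rw [if_pos (hs ▸ hlt)]
  have hb : 0 < acc pL (pureGT pL pH lam) :=
    lt_of_lt_of_le S.Mtop_pos (S.Mtop_le_accL hσ0 htop1)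
  exact S.gPos hn hσ0 hb (S.acc_mono_pureGT lam) (S.acc_le_ltop_mul hσ0) hcρ hKD

lemma stepUp (S : Setup ρ c pL pH top) {n : ℕ} (hn : 1 ≤ n) (hcρ : c ≤ ρ)
    (hKD : c*(1-ρ) < (1-c)*ρ * lr pL pH top) (hHN : HNcond n pL pH top)
    {lam : ℝ} (hlt : lam < lr pL pH top)
    (hC1 : C1cond ρ c n pL pH lam) :
    IsEquilibrium ρ c n pL pH (pureGT pL pH lam) ∨
    ∃ (lam' : ℝ) (t' : Fin m), lr pL pH t' = lam' ∧ lam < lam' ∧ lam' < lr pL pH top ∧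
      C1cond ρ c n pL pH lam' ∧
      (Finset.univ.filter (fun s => lam' < lr pL pH s)).card
        < (Finset.univ.filter (fun s => lam < lr pL pH s)).card := by
  set σ0 := pureGT pL pH lam with hσ0def
  have hσ0 : IsStrategy σ0 := pureGT_strategy pL pH lam
  have hSH0 : 0 < SS n (rej pH σ0) := SS_pos hn (S.rejH_nonneg hσ0)
  have hSL0 : 0 < SS n (rej pL σ0) := SS_pos hn (S.rejL_nonneg hσ0)
  have hal := S.al_pos
  have hbe := S.be_pos
  by_cases hC2 : ∀ s, lam < lr pL pH s → 0 ≤ Bf ρ c n pL pH σ0 s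
  · left
    rw [S.eq_iff hn]
    refine ⟨hσ0, fun s => ⟨?_, ?_⟩⟩
    · intro hpos
      by_cases h : lam < lr pL pH s
      · show (if lam < lr pL pH s then (1:ℝ) else 0) = 1
        rw [if_pos h]
      · exfalso
        push_neg at h
        have hBle : Bf ρ c n pL pH σ0 s ≤ 0 := by
          rw [S.Bf_eq]
          have h1 : (1-c)*ρ * SS n (rej pH σ0) * lr pL pH s
              ≤ (1-c)*ρ * SS n (rej pH σ0) * lam :=
            mul_le_mul_of_nonneg_left h (by positivity)
          have h2 : (1-c)*ρ * SS n (rej pH σ0) * lam ≤ c*(1-ρ) * SS n (rej pL σ0) := hC1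
          have hpl := (S.hpL s).le
          nlinarith
        linarith
    · intro hneg
      by_cases h : lam < lr pL pH s
      · exact absurd hneg (not_lt.2 (hC2 s h))
      · show (if lam < lr pL pH s then (1:ℝ) else 0) = 0
        rw [if_neg h]
  · right
    push_neg at hC2
    obtain ⟨s₀, hs₀l, hs₀B⟩ := hC2
    have hs₀F : s₀ ∈ Finset.univ.filter (fun s => lam < lr pL pH s) := by
      simp only [Finset.mem_filter, Finset.mem_univ, true_and]
      exact hs₀l
    obtain ⟨s', hs'F, hs'min⟩ :=
      Finset.exists_min_image (Finset.univ.filter (fun s => lam < lr pL pH s))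
        (lr pL pH) ⟨s₀, hs₀F⟩
    have hs'l : lam < lr pL pH s' := by
      have := (Finset.mem_filter.1 hs'F).2
      exact this
    have hgneg : (1-c)*ρ * SS n (rej pH σ0) * lr pL pH s' < c*(1-ρ) * SS n (rej pL σ0) := by
      rw [S.Bf_eq] at hs₀B
      have hpl := S.hpL s₀
      have hg0 : (1-c)*ρ * SS n (rej pH σ0) * lr pL pH s₀ < c*(1-ρ) * SS n (rej pL σ0) := by
        nlinarith
      have hmono : lr pL pH s' ≤ lr pL pH s₀ := hs'min s₀ hs₀F
      have hfac : (0:ℝ) ≤ (1-c)*ρ * SS n (rej pH σ0) := by positivity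
      nlinarith [mul_le_mul_of_nonneg_left hmono hfac]
    have hlt' : lr pL pH s' < lr pL pH top := by
      rcases (S.hltop s').lt_or_eq with h | h
      · exact h
      · exfalso
        have := S.gPos_pureGT hn hcρ hKD hlt (n := n)
        rw [← hσ0def] at this
        rw [h] at hgneg
        linarith
    have h_up : ∀ s, lr pL pH s' < lr pL pH s → σ0 s = 1 := by
      intro s hs
      show (if lam < lr pL pH s then (1:ℝ) else 0) = 1
      rw [if_pos (lt_trans hs'l hs)]
    have h_dn : ∀ s, lr pL pH s < lr pL pH s' → σ0 s = 0 := by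
      intro s hs
      show (if lam < lr pL pH s then (1:ℝ) else 0) = 0
      rw [if_neg]
      intro hcon
      have hmem : s ∈ Finset.univ.filter (fun u => lam < lr pL pH u) := by
        simp only [Finset.mem_filter, Finset.mem_univ, true_and]
        exact hcon
      exact absurd (hs'min s hmem) (not_le.2 hs)
    have happ := S.lemmaR_apply hn hHN (rfl : lr pL pH s' = lr pL pH s') hlt' hσ0 h_up h_dn
    refine ⟨lr pL pH s', s', rfl, hs'l, hlt', ?_, ?_⟩
    · unfold C1cond
      have hSH' : 0 < SS n (rej pH (pureGT pL pH (lr pL pH s'))) :=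
        SS_pos hn (S.rejH_nonneg (pureGT_strategy pL pH _))
      have hSL' : 0 < SS n (rej pL (pureGT pL pH (lr pL pH s'))) :=
        SS_pos hn (S.rejL_nonneg (pureGT_strategy pL pH _))
      set SH' := SS n (rej pH (pureGT pL pH (lr pL pH s')))
      set SL' := SS n (rej pL (pureGT pL pH (lr pL pH s')))
      set SH0 := SS n (rej pH σ0)
      set SL0 := SS n (rej pL σ0)
      -- happ : SL0 * SH' ≤ SL' * SH0
      -- hgneg : al * SH0 * lam' < be * SL0
      have step : ((1-c)*ρ * SH' * lr pL pH s') * SH0 ≤ (c*(1-ρ) * SL') * SH0 := by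
        have k1 : (1-c)*ρ * SH0 * lr pL pH s' * SH' ≤ c*(1-ρ) * SL0 * SH' :=
          (mul_le_mul_of_nonneg_right hgneg.le hSH'.le)
        have k2 : c*(1-ρ) * (SL0 * SH') ≤ c*(1-ρ) * (SL' * SH0) :=
          mul_le_mul_of_nonneg_left happ hbe.le
        nlinarith [k1, k2]
      exact le_of_mul_le_mul_right step hSH0
    · have hsub : Finset.univ.filter (fun s => lr pL pH s' < lr pL pH s)
          ⊆ Finset.univ.filter (fun s => lam < lr pL pH s) := by
        intro s hs
        simp only [Finset.mem_filter, Finset.mem_univ, true_and] at hs ⊢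
        exact lt_trans hs'l hs
      have hmem2 : s' ∉ Finset.univ.filter (fun s => lr pL pH s' < lr pL pH s) := by
        simp only [Finset.mem_filter, Finset.mem_univ, true_and]
        exact lt_irrefl _
      exact Finset.card_lt_card ((Finset.ssubset_iff_of_subset hsub).2 ⟨s', hs'F, hmem2⟩)

lemma exists_pure_eq (S : Setup ρ c pL pH top) {n : ℕ} (hn : 1 ≤ n) (hcρ : c ≤ ρ)
    (hKD : c*(1-ρ) < (1-c)*ρ * lr pL pH top) (hHN : HNcond n pL pH top) :
    ∀ (k : ℕ) (lam : ℝ), lam < lr pL pH top →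
      C1cond ρ c n pL pH lam →
      (Finset.univ.filter (fun s => lam < lr pL pH s)).card ≤ k →
      ∃ lam', lam ≤ lam' ∧ IsEquilibrium ρ c n pL pH (pureGT pL pH lam') := by
  intro k
  induction k with
  | zero =>
    intro lam hlt hC1 hcard
    rcases S.stepUp hn hcρ hKD hHN hlt hC1 with he | ⟨lam', t', _, hll', _, _, hcd⟩
    · exact ⟨lam, le_refl _, he⟩
    · omega
  | succ k ih =>
    intro lam hlt hC1 hcard
    rcases S.stepUp hn hcρ hKD hHN hlt hC1 with he | ⟨lam', t', hwit', hll', hlt', hC1', hcd⟩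
    · exact ⟨lam, le_refl _, he⟩
    · obtain ⟨lam'', h1, h2⟩ := ih lam' hlt' hC1' (by omega)
      exact ⟨lam'', le_trans hll'.le h1, h2⟩

/-- the most selective equilibrium is a pure threshold strategy (for large `n`) -/
lemma purity (S : Setup ρ c pL pH top) {n : ℕ} (hn : 1 ≤ n) (hcρ : c ≤ ρ)
    (hKD : c*(1-ρ) < (1-c)*ρ * lr pL pH top) (hHN : HNcond n pL pH top)
    {σh : Fin m → ℝ} (hms : MostSelective ρ c n pL pH σh) :
    ∃ t : Fin m, σh = pureGE pL pH (lr pL pH t) := by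
  obtain ⟨he, hmin⟩ := hms
  obtain ⟨hσ, hB⟩ := (S.eq_iff hn σh).1 he
  have htopAcc : ∀ s, lr pL pH s = lr pL pH top → σh s = 1 := S.topAccept hn hcρ hKD he
  have hal := S.al_pos
  have hbe := S.be_pos
  have hSH : 0 < SS n (rej pH σh) := SS_pos hn (S.rejH_nonneg hσ)
  have hSL : 0 < SS n (rej pL σh) := SS_pos hn (S.rejL_nonneg hσ)
  have hne : (Finset.univ.filter (fun s => 0 < σh s)).Nonempty := by
    refine ⟨top, ?_⟩
    simp only [Finset.mem_filter, Finset.mem_univ, true_and]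
    rw [htopAcc top rfl]
    norm_num
  obtain ⟨sstar, hsmem, hsmin⟩ :=
    Finset.exists_min_image (Finset.univ.filter (fun s => 0 < σh s)) (lr pL pH) hne
  have hspos : 0 < σh sstar := (Finset.mem_filter.1 hsmem).2
  -- bracket at sstar is nonnegative
  have hgge : c*(1-ρ) * SS n (rej pL σh) ≤ (1-c)*ρ * SS n (rej pH σh) * lr pL pH sstar := by
    have h1 : ¬ Bf ρ c n pL pH σh sstar < 0 := by
      intro hcon
      rw [(hB sstar).2 hcon] at hspos
      exact lt_irrefl 0 hspos
    push_neg at h1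
    rw [S.Bf_eq] at h1
    have hpl := S.hpL sstar
    nlinarith
  have hTplus : ∀ s, lr pL pH sstar < lr pL pH s → σh s = 1 := by
    intro s hs
    apply (hB s).1
    rw [S.Bf_eq]
    have hpl := S.hpL s
    have hfac : (0:ℝ) < (1-c)*ρ * SS n (rej pH σh) := by positivity
    nlinarith [mul_lt_mul_of_pos_left hs hfac]
  have hZlow : ∀ s, lr pL pH s < lr pL pH sstar → σh s = 0 := by
    intro s h
    rcases (hσ s).1.eq_or_lt with h0 | h0
    · exact h0.symm
    · exfalso
      have hmem : s ∈ Finset.univ.filter (fun u => 0 < σh u) := by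
        simp only [Finset.mem_filter, Finset.mem_univ, true_and]
        exact h0
      exact absurd (hsmin s hmem) (not_le.2 h)
  by_cases hall : ∀ s, lr pL pH s = lr pL pH sstar → σh s = 1
  · refine ⟨sstar, ?_⟩
    funext s
    show σh s = if lr pL pH sstar ≤ lr pL pH s then (1:ℝ) else 0
    rcases lt_trichotomy (lr pL pH s) (lr pL pH sstar) with h | h | h
    · rw [if_neg (not_le.2 h), hZlow s h]
    · rw [if_pos h.ge, hall s h]
    · rw [if_pos h.le, hTplus s h]
  · push_neg at hall
    obtain ⟨s', hs'eq, hs'ne⟩ := hall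
    have hgle : (1-c)*ρ * SS n (rej pH σh) * lr pL pH sstar ≤ c*(1-ρ) * SS n (rej pL σh) := by
      have h1 : ¬ (0 < Bf ρ c n pL pH σh s') := by
        intro hcon
        exact hs'ne ((hB s').1 hcon)
      push_neg at h1
      rw [S.Bf_eq, hs'eq] at h1
      have hpl := S.hpL s'
      nlinarith
    have hlamlt : lr pL pH sstar < lr pL pH top := by
      rcases (S.hltop sstar).lt_or_eq with h | h
      · exact h
      · exfalso
        exact hs'ne (htopAcc s' (by rw [hs'eq, h]))
    have happ := S.lemmaR_apply hn hHN (rfl : lr pL pH sstar = lr pL pH sstar) hlamlt hσ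
      hTplus hZlow
    have hC1 : C1cond ρ c n pL pH (lr pL pH sstar) := by
      unfold C1cond
      have hSH0 : 0 < SS n (rej pH (pureGT pL pH (lr pL pH sstar))) :=
        SS_pos hn (S.rejH_nonneg (pureGT_strategy pL pH _))
      have step : ((1-c)*ρ * SS n (rej pH (pureGT pL pH (lr pL pH sstar))) * lr pL pH sstar)
            * SS n (rej pH σh)
          ≤ (c*(1-ρ) * SS n (rej pL (pureGT pL pH (lr pL pH sstar)))) * SS n (rej pH σh) := by
        have k1 : ((1-c)*ρ * SS n (rej pH σh) * lr pL pH sstar)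
              * SS n (rej pH (pureGT pL pH (lr pL pH sstar)))
            ≤ (c*(1-ρ) * SS n (rej pL σh))
              * SS n (rej pH (pureGT pL pH (lr pL pH sstar))) :=
          mul_le_mul_of_nonneg_right hgle hSH0.le
        have k2 : c*(1-ρ) * (SS n (rej pL σh) * SS n (rej pH (pureGT pL pH (lr pL pH sstar))))
            ≤ c*(1-ρ) * (SS n (rej pL (pureGT pL pH (lr pL pH sstar))) * SS n (rej pH σh)) :=
          mul_le_mul_of_nonneg_left happ hbe.le
        nlinarith [k1, k2]
      exact le_of_mul_le_mul_right step hSH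
    obtain ⟨lam', hge, heq'⟩ := S.exists_pure_eq hn hcρ hKD hHN
      (Finset.univ.filter (fun s => lr pL pH sstar < lr pL pH s)).card
      (lr pL pH sstar) hlamlt hC1 (le_refl _)
    exfalso
    have hle := hmin _ heq' sstar
    have hz : pureGT pL pH lam' sstar = 0 := by
      unfold pureGT
      rw [if_neg (not_lt.2 hge)]
    rw [hz] at hle
    linarith
end Setup

/-! ### stabilization in `n` of pure equilibria -/

namespace Setup

variable {ρ c : ℝ} {m : ℕ} {pL pH : Fin m → ℝ} {top : Fin m}

lemma pureGE_eq_iff (S : Setup ρ c pL pH top) {n : ℕ} (hn : 1 ≤ n) (t : Fin m) :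
    IsEquilibrium ρ c n pL pH (pureGE pL pH (lr pL pH t)) ↔
      (0 ≤ (1-c)*ρ * SS n (rej pH (pureGE pL pH (lr pL pH t))) * lr pL pH t
          - c*(1-ρ) * SS n (rej pL (pureGE pL pH (lr pL pH t)))) ∧
      (∀ s, lr pL pH s < lr pL pH t →
        (1-c)*ρ * SS n (rej pH (pureGE pL pH (lr pL pH t))) * lr pL pH s
          - c*(1-ρ) * SS n (rej pL (pureGE pL pH (lr pL pH t))) ≤ 0) := by
  set σt := pureGE pL pH (lr pL pH t) with hσtdef
  have hσ : IsStrategy σt := pureGE_strategy pL pH _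
  have hSH : 0 < SS n (rej pH σt) := SS_pos hn (S.rejH_nonneg hσ)
  have hal := S.al_pos
  constructor
  · intro he
    obtain ⟨_, hB⟩ := (S.eq_iff hn σt).1 he
    constructor
    · have hval : σt t = 1 := by
        rw [hσtdef]; unfold pureGE; rw [if_pos (le_refl _)]
      have h1 : ¬ Bf ρ c n pL pH σt t < 0 := by
        intro hcon
        rw [(hB t).2 hcon] at hval
        norm_num at hval
      push_neg at h1
      rw [S.Bf_eq] at h1
      have hpl := S.hpL t
      nlinarith
    · intro s hs
      have hval : σt s = 0 := by
        rw [hσtdef]; unfold pureGE; rw [if_neg (not_le.2 hs)]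
      have h1 : ¬ 0 < Bf ρ c n pL pH σt s := by
        intro hcon
        rw [(hB s).1 hcon] at hval
        norm_num at hval
      push_neg at h1
      rw [S.Bf_eq] at h1
      have hpl := S.hpL s
      nlinarith
  · rintro ⟨hD1, hD2⟩
    rw [S.eq_iff hn]
    refine ⟨hσ, fun s => ⟨?_, ?_⟩⟩
    · intro hpos
      by_cases h : lr pL pH t ≤ lr pL pH s
      · rw [hσtdef]; unfold pureGE; rw [if_pos h]
      · exfalso
        push_neg at h
        have := hD2 s h
        rw [S.Bf_eq] at hpos
        have hpl := S.hpL s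
        nlinarith
    · intro hneg
      by_cases h : lr pL pH t ≤ lr pL pH s
      · exfalso
        rw [S.Bf_eq] at hneg
        have hpl := S.hpL s
        have hmono : (1-c)*ρ * SS n (rej pH σt) * lr pL pH t
            ≤ (1-c)*ρ * SS n (rej pH σt) * lr pL pH s :=
          mul_le_mul_of_nonneg_left h (by positivity)
        nlinarith
      · rw [hσtdef]; unfold pureGE; rw [if_neg h]

open Filter in
/-- the equilibrium status of each pure threshold strategy stabilizes as `n → ∞` -/
lemma pureGE_eq_stabilizes (S : Setup ρ c pL pH top) (t : Fin m) :
    ∃ v : Prop, ∀ᶠ n in Filter.atTop,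
      (IsEquilibrium ρ c n pL pH (pureGE pL pH (lr pL pH t)) ↔ v) := by
  set σt := pureGE pL pH (lr pL pH t) with hσtdef
  have hσ : IsStrategy σt := pureGE_strategy pL pH _
  have hab : acc pL σt ≤ acc pH σt := S.acc_mono_pureGE _
  have hy : 0 ≤ rej pH σt := S.rejH_nonneg hσ
  have hxy : rej pH σt ≤ rej pL σt := by
    rw [rej_acc, rej_acc]; linarith
  have hal := S.al_pos
  have hbe := S.be_pos
  set D1 : ℕ → Prop := fun n =>
    0 ≤ (1-c)*ρ * SS n (rej pH σt) * lr pL pH t - c*(1-ρ) * SS n (rej pL σt) with hD1def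
  set D2 : ℕ → Prop := fun n => ∀ s, lr pL pH s < lr pL pH t →
    (1-c)*ρ * SS n (rej pH σt) * lr pL pH s - c*(1-ρ) * SS n (rej pL σt) ≤ 0 with hD2def
  have cross : ∀ n : ℕ, SS n (rej pL σt) * SS (n+1) (rej pH σt)
      ≤ SS (n+1) (rej pL σt) * SS n (rej pH σt) := fun n => SS_succ_cross hy hxy
  have keystep : ∀ (x : ℝ) (n : ℕ), 1 ≤ n →
      (1-c)*ρ * SS n (rej pH σt) * x ≤ c*(1-ρ) * SS n (rej pL σt) →
      (1-c)*ρ * SS (n+1) (rej pH σt) * x ≤ c*(1-ρ) * SS (n+1) (rej pL σt) := by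
    intro x n hn h
    have hSHn : 0 < SS n (rej pH σt) := SS_pos hn hy
    have hSH1 : 0 < SS (n+1) (rej pH σt) := SS_pos (by omega) hy
    have k1 : ((1-c)*ρ * SS n (rej pH σt) * x) * SS (n+1) (rej pH σt)
        ≤ (c*(1-ρ) * SS n (rej pL σt)) * SS (n+1) (rej pH σt) :=
      mul_le_mul_of_nonneg_right h hSH1.le
    have k2 : c*(1-ρ) * (SS n (rej pL σt) * SS (n+1) (rej pH σt))
        ≤ c*(1-ρ) * (SS (n+1) (rej pL σt) * SS n (rej pH σt)) :=
      mul_le_mul_of_nonneg_left (cross n) hbe.le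
    have k3 : ((1-c)*ρ * SS (n+1) (rej pH σt) * x) * SS n (rej pH σt)
        ≤ (c*(1-ρ) * SS (n+1) (rej pL σt)) * SS n (rej pH σt) := by
      nlinarith [k1, k2]
    exact le_of_mul_le_mul_right k3 hSHn
  have keystep_strict : ∀ (x : ℝ) (n : ℕ), 1 ≤ n →
      (1-c)*ρ * SS n (rej pH σt) * x < c*(1-ρ) * SS n (rej pL σt) →
      (1-c)*ρ * SS (n+1) (rej pH σt) * x < c*(1-ρ) * SS (n+1) (rej pL σt) := by
    intro x n hn h
    have hSHn : 0 < SS n (rej pH σt) := SS_pos hn hy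
    have hSH1 : 0 < SS (n+1) (rej pH σt) := SS_pos (by omega) hy
    have k1 : ((1-c)*ρ * SS n (rej pH σt) * x) * SS (n+1) (rej pH σt)
        < (c*(1-ρ) * SS n (rej pL σt)) * SS (n+1) (rej pH σt) :=
      mul_lt_mul_of_pos_right h hSH1
    have k2 : c*(1-ρ) * (SS n (rej pL σt) * SS (n+1) (rej pH σt))
        ≤ c*(1-ρ) * (SS (n+1) (rej pL σt) * SS n (rej pH σt)) :=
      mul_le_mul_of_nonneg_left (cross n) hbe.le
    have k3 : ((1-c)*ρ * SS (n+1) (rej pH σt) * x) * SS n (rej pH σt)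
        < (c*(1-ρ) * SS (n+1) (rej pL σt)) * SS n (rej pH σt) := by
      nlinarith [k1, k2]
    exact lt_of_mul_lt_mul_right k3 hSHn.le
  -- D1 propagates falsity, D2 propagates truth
  have hD1step : ∀ n, 1 ≤ n → ¬ D1 n → ¬ D1 (n+1) := by
    intro n hn h
    rw [hD1def] at h ⊢
    push_neg at h ⊢
    have h' : (1-c)*ρ * SS n (rej pH σt) * lr pL pH t < c*(1-ρ) * SS n (rej pL σt) := by
      linarith
    have := keystep_strict (lr pL pH t) n hn h'
    linarith
  have hD2step : ∀ n, 1 ≤ n → D2 n → D2 (n+1) := by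
    intro n hn h
    rw [hD2def] at h ⊢
    intro s hs
    have h' : (1-c)*ρ * SS n (rej pH σt) * lr pL pH s ≤ c*(1-ρ) * SS n (rej pL σt) := by
      linarith [h s hs]
    have := keystep (lr pL pH s) n hn h'
    linarith
  -- case analysis
  by_cases hA : ∀ n, 1 ≤ n → D1 n
  · by_cases hB : ∃ n, 1 ≤ n ∧ D2 n
    · obtain ⟨n₁, hn₁, hD⟩ := hB
      refine ⟨True, ?_⟩
      rw [Filter.eventually_atTop]
      refine ⟨n₁, fun n hn => ?_⟩
      have hD2n : D2 n := by
        induction n, hn using Nat.le_induction with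
        | base => exact hD
        | succ k hk ih => exact hD2step k (le_trans hn₁ hk) ih
      rw [iff_true]
      exact (S.pureGE_eq_iff (le_trans hn₁ hn) t).2 ⟨hA n (le_trans hn₁ hn), hD2n⟩
    · push_neg at hB
      refine ⟨False, ?_⟩
      rw [Filter.eventually_atTop]
      refine ⟨1, fun n hn => ?_⟩
      rw [iff_false]
      intro hcon
      exact hB n hn ((S.pureGE_eq_iff hn t).1 hcon).2
  · push_neg at hA
    obtain ⟨n₀, hn₀, hnD1⟩ := hA
    refine ⟨False, ?_⟩
    rw [Filter.eventually_atTop]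
    refine ⟨n₀, fun n hn => ?_⟩
    have hD1n : ¬ D1 n := by
      induction n, hn using Nat.le_induction with
      | base => exact hnD1
      | succ k hk ih => exact hD1step k (le_trans hn₀ hk) ih
    rw [iff_false]
    intro hcon
    exact hD1n ((S.pureGE_eq_iff (le_trans hn₀ hn) t).1 hcon).1

end Setup

/-! ### analytic eventualities -/

open Filter

lemma tendsto_n_gamma {γ : ℝ} (h0 : 0 ≤ γ) (h1 : γ < 1) :
    Tendsto (fun n : ℕ => (n:ℝ) * γ^(n-1)) atTop (𝓝 0) := by
  have hnorm : ‖γ‖ < 1 := by rwa [Real.norm_eq_abs, abs_of_nonneg h0]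
  have hsum : Summable (fun n : ℕ => (n:ℝ)^1 * γ^n) :=
    summable_pow_mul_geometric_of_norm_lt_one 1 hnorm
  have ht1 : Tendsto (fun n : ℕ => (n:ℝ)^1 * γ^n) atTop (𝓝 0) := hsum.tendsto_atTop_zero
  have ht2 : Tendsto (fun n : ℕ => γ^n) atTop (𝓝 0) :=
    tendsto_pow_atTop_nhds_zero_of_lt_one h0 h1
  have hg : Tendsto (fun k : ℕ => (k:ℝ)^1 * γ^k + γ^k) atTop (𝓝 0) := by
    have := ht1.add ht2
    simpa using this
  have hcomp : Tendsto (fun n : ℕ => ((n-1:ℕ):ℝ)^1 * γ^(n-1) + γ^(n-1)) atTop (𝓝 0) :=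
    hg.comp (tendsto_sub_atTop_nat 1)
  apply hcomp.congr'
  filter_upwards [eventually_ge_atTop 1] with n hn
  have hcast : ((n-1:ℕ):ℝ) = (n:ℝ) - 1 := by
    rw [Nat.cast_sub hn]
    norm_num
  rw [hcast]
  ring

namespace Setup

variable {ρ c : ℝ} {m : ℕ} {pL pH : Fin m → ℝ} {top : Fin m}

lemma HN_eventually (S : Setup ρ c pL pH top) :
    ∀ᶠ n in atTop, HNcond n pL pH top := by
  have hM : 0 < Mtop pL pH top := S.Mtop_pos
  have hM1 : Mtop pL pH top ≤ 1 := S.Mtop_le_one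
  have ht := tendsto_n_gamma (γ := 1 - Mtop pL pH top) (by linarith) (by linarith)
  unfold HNcond
  rw [Filter.eventually_all]
  intro s
  by_cases hs : lr pL pH s < lr pL pH top
  · have hC : 0 < (Mtop pL pH top * (lr pL pH top - lr pL pH s)) * (Mtop pL pH top)^2 := by
      have : 0 < lr pL pH top - lr pL pH s := by linarith
      positivity
    filter_upwards [ht.eventually_lt_const hC] with n hn
    intro _
    exact hn.le
  · filter_upwards with n
    intro hcon
    exact absurd hcon hs

/-- eventual monotonicity of the surplus of any fixed pure threshold strategy -/
lemma final_mono (S : Setup ρ c pL pH top) (hcρ : c ≤ ρ) (t : Fin m) :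
    ∀ᶠ n in atTop, surplus ρ c (n+1) pL pH (pureGE pL pH (lr pL pH t))
      ≤ surplus ρ c n pL pH (pureGE pL pH (lr pL pH t)) := by
  set σs := pureGE pL pH (lr pL pH t) with hσdef
  have hσ : IsStrategy σs := pureGE_strategy pL pH _
  have hal := S.al_pos
  have hbe := S.be_pos
  have htop1 : ∀ s, lr pL pH s = lr pL pH top → σs s = 1 := by
    intro s hs
    rw [hσdef]; unfold pureGE
    rw [if_pos (by rw [hs]; exact S.hltop t)]
  have hM : 0 < Mtop pL pH top := S.Mtop_pos
  have hMb : Mtop pL pH top ≤ acc pL σs := S.Mtop_le_accL hσ htop1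
  have hMa : Mtop pL pH top ≤ acc pH σs := S.Mtop_le_accH hσ htop1
  have hab : acc pL σs ≤ acc pH σs := S.acc_mono_pureGE _
  have hb1 : acc pL σs ≤ 1 := S.acc_le_one_L hσ
  have ha1 : acc pH σs ≤ 1 := S.acc_le_one_H hσ
  have hbpos : 0 < acc pL σs := lt_of_lt_of_le hM hMb
  have hapos : 0 < acc pH σs := lt_of_lt_of_le hM hMa
  have hreH : rej pH σs = 1 - acc pH σs := rfl
  have hreL : rej pL σs = 1 - acc pL σs := rfl
  have hdiff : ∀ n : ℕ, surplus ρ c n pL pH σs - surplus ρ c (n+1) pL pH σs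
      = c*(1-ρ) * acc pL σs * (1 - acc pL σs)^n
        - (1-c)*ρ * acc pH σs * (1 - acc pH σs)^n := by
    intro n
    unfold surplus
    rw [hreH, hreL, pow_succ, pow_succ]
    ring
  by_cases hrej : ∀ s, lr pL pH t ≤ lr pL pH s
  · -- everything accepted: a = b = 1
    have hone : ∀ s, σs s = 1 := by
      intro s
      rw [hσdef]; unfold pureGE
      rw [if_pos (hrej s)]
    have haeq : acc pH σs = 1 := by
      unfold acc
      rw [← S.hsH]
      apply Finset.sum_congr rfl
      intro s _
      rw [hone s, mul_one]
    have hbeq : acc pL σs = 1 := by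
      unfold acc
      rw [← S.hsL]
      apply Finset.sum_congr rfl
      intro s _
      rw [hone s, mul_one]
    filter_upwards [eventually_ge_atTop 1] with n hn
    have := hdiff n
    rw [haeq, hbeq] at this
    have hz : (1 - (1:ℝ))^n = 0 := by
      rw [sub_self]
      exact zero_pow (by omega)
    rw [hz] at this
    linarith
  · -- some signal rejected: a > b strictly
    push_neg at hrej
    obtain ⟨s₀, hs₀⟩ := hrej
    have hsum0 : ∑ s, (pH s - pL s) = 0 := by
      rw [Finset.sum_sub_distrib, S.hsL, S.hsH]; ring
    have hsplit := Finset.sum_filter_add_sum_filter_not Finset.univ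
      (fun s => lr pL pH t ≤ lr pL pH s) (fun s => pH s - pL s)
    have hacc : acc pH σs - acc pL σs
        = ∑ s ∈ Finset.univ.filter (fun s => lr pL pH t ≤ lr pL pH s), (pH s - pL s) := by
      have h1 : acc pH σs - acc pL σs = ∑ s, (pH s - pL s) * σs s := by
        unfold acc
        rw [← Finset.sum_sub_distrib]
        apply Finset.sum_congr rfl
        intro s _
        ring
      have hsplit2 := Finset.sum_filter_add_sum_filter_not Finset.univ
        (fun s => lr pL pH t ≤ lr pL pH s) (fun s => (pH s - pL s) * σs s)
      have h2 : ∑ s ∈ Finset.univ.filter (fun s => ¬ lr pL pH t ≤ lr pL pH s),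
          (pH s - pL s) * σs s = 0 := by
        apply Finset.sum_eq_zero
        intro s hs
        have hz : σs s = 0 := by
          rw [hσdef]; unfold pureGE
          rw [if_neg (Finset.mem_filter.1 hs).2]
        rw [hz, mul_zero]
      have h3 : ∑ s ∈ Finset.univ.filter (fun s => lr pL pH t ≤ lr pL pH s),
          (pH s - pL s) * σs s = ∑ s ∈ Finset.univ.filter
            (fun s => lr pL pH t ≤ lr pL pH s), (pH s - pL s) := by
        apply Finset.sum_congr rfl
        intro s hs
        have ho : σs s = 1 := by
          rw [hσdef]; unfold pureGE
          rw [if_pos (Finset.mem_filter.1 hs).2]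
        rw [ho, mul_one]
      rw [h1, ← hsplit2, h2, h3, add_zero]
    have hstrict : acc pL σs < acc pH σs := by
      rcases le_or_gt (lr pL pH t) 1 with hc | hc
      · -- threshold at most one: the rejected part has strictly negative pH - pL sum
        have hneg : ∑ s ∈ Finset.univ.filter (fun s => ¬ lr pL pH t ≤ lr pL pH s),
            (pH s - pL s) < 0 := by
          apply Finset.sum_neg
          · intro s hs
            have hlt : lr pL pH s < lr pL pH t := not_le.1 (Finset.mem_filter.1 hs).2
            have hpl := S.hpL s
            have := S.pH_eq s
            nlinarith
          · refine ⟨s₀, ?_⟩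
            simp only [Finset.mem_filter, Finset.mem_univ, true_and]
            exact not_le.2 hs₀
        linarith [hacc, hsplit, hsum0, hneg]
      · -- threshold above one: accepted part is strictly positive
        have hpos : 0 < ∑ s ∈ Finset.univ.filter (fun s => lr pL pH t ≤ lr pL pH s),
            (pH s - pL s) := by
          apply Finset.sum_pos
          · intro s hs
            have hge : lr pL pH t ≤ lr pL pH s := (Finset.mem_filter.1 hs).2
            have hpl := S.hpL s
            have := S.pH_eq s
            nlinarith
          · refine ⟨top, ?_⟩
            simp only [Finset.mem_filter, Finset.mem_univ, true_and]
            exact S.hltop t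
        linarith [hacc, hpos]
    have hblt1 : acc pL σs < 1 := lt_of_lt_of_le hstrict ha1
    rcases eq_or_lt_of_le ha1 with haeq | halt
    · -- a = 1: the high-type decay term vanishes
      filter_upwards [eventually_ge_atTop 1] with n hn
      have hd := hdiff n
      rw [haeq] at hd
      have hz : (1 - (1:ℝ))^n = 0 := by
        rw [sub_self]
        exact zero_pow (by omega)
      rw [hz] at hd
      have hnn : 0 ≤ c*(1-ρ) * acc pL σs * (1 - acc pL σs)^n := by
        have h1 : (0:ℝ) ≤ 1 - acc pL σs := by linarith
        positivity
      linarith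
    · -- a < 1: geometric domination
      set q := (1 - acc pH σs)/(1 - acc pL σs) with hqdef
      have h1b : (0:ℝ) < 1 - acc pL σs := by linarith
      have h1a : (0:ℝ) < 1 - acc pH σs := by linarith
      have hq0 : 0 ≤ q := by positivity
      have hq1 : q < 1 := (div_lt_one h1b).2 (by linarith)
      have ht := tendsto_pow_atTop_nhds_zero_of_lt_one hq0 hq1
      have hpos' : (0:ℝ) < (c*(1-ρ) * acc pL σs) / ((1-c)*ρ * acc pH σs) := by positivity
      filter_upwards [ht.eventually_lt_const hpos', eventually_ge_atTop 1] with n h1 hn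
      have hfac : (1 - acc pH σs) = q * (1 - acc pL σs) := by
        rw [hqdef, div_mul_cancel₀ _ h1b.ne']
      have hpow : (1 - acc pH σs)^n = q^n * (1 - acc pL σs)^n := by
        rw [hfac, mul_pow]
      have h2 : q^n * ((1-c)*ρ * acc pH σs) < c*(1-ρ) * acc pL σs := by
        have := (lt_div_iff₀ (by positivity : (0:ℝ) < (1-c)*ρ * acc pH σs)).1 h1
        linarith
      have h3 : (1-c)*ρ * acc pH σs * (1 - acc pH σs)^n
          ≤ c*(1-ρ) * acc pL σs * (1 - acc pL σs)^n := by
        rw [hpow]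
        calc (1-c)*ρ * acc pH σs * (q^n * (1 - acc pL σs)^n)
            = (q^n * ((1-c)*ρ * acc pH σs)) * (1 - acc pL σs)^n := by ring
        _ ≤ (c*(1-ρ) * acc pL σs) * (1 - acc pL σs)^n :=
            mul_le_mul_of_nonneg_right h2.le (pow_nonneg h1b.le n)
      have hd := hdiff n
      linarith

end Setup

/-! ### convergence bound, low-prior case, degenerate case -/

namespace Setup

variable {ρ c : ℝ} {m : ℕ} {pL pH : Fin m → ℝ} {top : Fin m}

lemma surplus_close (S : Setup ρ c pL pH top) (hcρ : c ≤ ρ)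
    (hKD : c*(1-ρ) < (1-c)*ρ * lr pL pH top) {n : ℕ} (hn : 1 ≤ n) {σ : Fin m → ℝ}
    (he : IsEquilibrium ρ c n pL pH σ) :
    |surplus ρ c n pL pH σ - (ρ - c)| ≤ 2 * (1 - Mtop pL pH top)^n := by
  have hσ := he.1
  have htop1 := S.topAccept hn hcρ hKD he
  have hM : 0 < Mtop pL pH top := S.Mtop_pos
  have hMb := S.Mtop_le_accL hσ htop1
  have hMa := S.Mtop_le_accH hσ htop1
  have hrH0 : 0 ≤ rej pH σ := S.rejH_nonneg hσ
  have hrL0 : 0 ≤ rej pL σ := S.rejL_nonneg hσ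
  have hrH : rej pH σ ≤ 1 - Mtop pL pH top := by
    rw [rej_acc]; linarith
  have hrL : rej pL σ ≤ 1 - Mtop pL pH top := by
    rw [rej_acc]; linarith
  have hpH1 : rej pH σ^n ≤ (1 - Mtop pL pH top)^n := pow_le_pow_left₀ hrH0 hrH n
  have hpL1 : rej pL σ^n ≤ (1 - Mtop pL pH top)^n := pow_le_pow_left₀ hrL0 hrL n
  have hpH0 : 0 ≤ rej pH σ^n := pow_nonneg hrH0 n
  have hpL0 : 0 ≤ rej pL σ^n := pow_nonneg hrL0 n
  have hg0 : 0 ≤ (1 - Mtop pL pH top)^n := le_trans hpH0 hpH1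
  have hexp : surplus ρ c n pL pH σ - (ρ - c)
      = c*(1-ρ) * rej pL σ^n - (1-c)*ρ * rej pH σ^n := by
    unfold surplus; ring
  have hal1 : (1-c)*ρ ≤ 1 := by
    have := S.hρ1; have := S.hc0; have := S.hρ0; have := S.hc1; nlinarith
  have hbe1 : c*(1-ρ) ≤ 1 := by
    have := S.hρ1; have := S.hc0; have := S.hρ0; have := S.hc1; nlinarith
  have hal0 := S.al_pos
  have hbe0 := S.be_pos
  rw [hexp, abs_le]
  constructor
  · have k1 : (1-c)*ρ * rej pH σ^n ≤ 1 * (1 - Mtop pL pH top)^n := by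
      apply mul_le_mul hal1 hpH1 hpH0 (by norm_num)
    have k2 : 0 ≤ c*(1-ρ) * rej pL σ^n := by positivity
    linarith
  · have k1 : c*(1-ρ) * rej pL σ^n ≤ 1 * (1 - Mtop pL pH top)^n := by
      apply mul_le_mul hbe1 hpL1 hpL0 (by norm_num)
    have k2 : 0 ≤ (1-c)*ρ * rej pH σ^n := by positivity
    linarith

open Filter in
lemma low_case (S : Setup ρ c pL pH top) (hρc : ρ < c) :
    ∀ᶠ n in atTop, ∀ σ : Fin m → ℝ,
      IsEquilibrium ρ c n pL pH σ → surplus ρ c n pL pH σ = 0 := by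
  set γ₀ := 1 - pL top with hγ₀def
  have hpLtop := S.hpL top
  have hpLtop1 : pL top ≤ 1 := by
    have h := Finset.single_le_sum (fun s _ => (S.hpL s).le) (Finset.mem_univ top)
    rw [S.hsL] at h
    exact h
  have hγ₀0 : 0 ≤ γ₀ := by rw [hγ₀def]; linarith
  have hγ₀1 : γ₀ < 1 := by rw [hγ₀def]; linarith
  have hpow : Tendsto (fun n : ℕ => γ₀^n) atTop (𝓝 0) :=
    tendsto_pow_atTop_nhds_zero_of_lt_one hγ₀0 hγ₀1
  have htend : Tendsto (fun n : ℕ => (1-c)*ρ - c*(1-ρ)*(1 - γ₀^n)) atTop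
      (𝓝 ((1-c)*ρ - c*(1-ρ)*(1 - 0))) :=
    tendsto_const_nhds.sub (tendsto_const_nhds.mul (tendsto_const_nhds.sub hpow))
  have hlim : (1-c)*ρ - c*(1-ρ)*(1 - 0) < 0 := by nlinarith
  filter_upwards [htend.eventually_lt_const hlim, eventually_ge_atTop 1] with n hneg hn
  intro σ he
  obtain ⟨hσ, hB⟩ := (S.eq_iff hn σ).1 he
  have hSH : 0 < SS n (rej pH σ) := SS_pos hn (S.rejH_nonneg hσ)
  have hSL : 0 < SS n (rej pL σ) := SS_pos hn (S.rejL_nonneg hσ)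
  have hal := S.al_pos
  have hbe := S.be_pos
  have hBle : ∀ s, Bf ρ c n pL pH σ s ≤ 0 := by
    by_contra hcon
    push_neg at hcon
    obtain ⟨s, hs⟩ := hcon
    rw [S.Bf_eq] at hs
    have hpl := S.hpL s
    have hg : 0 < (1-c)*ρ * SS n (rej pH σ) * lr pL pH s - c*(1-ρ) * SS n (rej pL σ) := by
      nlinarith
    have hgt : 0 < (1-c)*ρ * SS n (rej pH σ) * lr pL pH top - c*(1-ρ) * SS n (rej pL σ) := by
      have hmono : (1-c)*ρ * SS n (rej pH σ) * lr pL pH s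
          ≤ (1-c)*ρ * SS n (rej pH σ) * lr pL pH top :=
        mul_le_mul_of_nonneg_left (S.hltop s) (by positivity)
      linarith
    have hBtop : 0 < Bf ρ c n pL pH σ top := by
      rw [S.Bf_eq]
      exact mul_pos (S.hpL top) hgt
    have hσtop : σ top = 1 := (hB top).1 hBtop
    have hbb : pL top ≤ acc pL σ := by
      have h1 : pL top * σ top ≤ acc pL σ :=
        Finset.single_le_sum (fun s _ => mul_nonneg (S.hpL s).le (hσ s).1)
          (Finset.mem_univ top)
      rw [hσtop, mul_one] at h1
      exact h1
    have hrL : rej pL σ ≤ γ₀ := by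
      rw [rej_acc, hγ₀def]; linarith
    have hrLn : rej pL σ^n ≤ γ₀^n := pow_le_pow_left₀ (S.rejL_nonneg hσ) hrL n
    have hrHn : 0 ≤ rej pH σ^n := pow_nonneg (S.rejH_nonneg hσ) n
    have hsneg : surplus ρ c n pL pH σ < 0 := by
      unfold surplus
      have k1 : c*(1-ρ)*(1 - γ₀^n) ≤ c*(1-ρ)*(1 - rej pL σ^n) :=
        mul_le_mul_of_nonneg_left (by linarith) hbe.le
      nlinarith
    linarith [S.surplus_nonneg hn he]
  have h1 : surplus ρ c n pL pH σ ≤ 0 := by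
    rw [S.surplus_eq_sum n σ]
    apply Finset.sum_nonpos
    intro s _
    exact mul_nonpos_of_nonneg_of_nonpos (hσ s).1 (hBle s)
  exact le_antisymm h1 (S.surplus_nonneg hn he)

lemma d0_case (S : Setup ρ c pL pH top) (hcρ : c ≤ ρ)
    (hKD' : (1-c)*ρ * lr pL pH top ≤ c*(1-ρ)) {n : ℕ} (hn : 1 ≤ n) {σ : Fin m → ℝ}
    (hms : MostSelective ρ c n pL pH σ) :
    ρ = c ∧ surplus ρ c n pL pH σ = 0 := by
  have hal := S.al_pos
  have hbe := S.be_pos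
  have h1 := S.one_le_ltop
  have halbe : c*(1-ρ) ≤ (1-c)*ρ := by nlinarith
  have hleft : (1-c)*ρ ≤ (1-c)*ρ * lr pL pH top := by nlinarith
  have heq : (1-c)*ρ = c*(1-ρ) := le_antisymm (le_trans hleft hKD') halbe
  have hρc : ρ = c := by nlinarith
  have hltop1 : lr pL pH top = 1 := by
    have h2 : (1-c)*ρ * lr pL pH top = (1-c)*ρ * 1 := by
      rw [mul_one]
      linarith [hKD', heq, hleft]
    exact mul_left_cancel₀ hal.ne' h2
  have hpHL : ∀ s, pH s = pL s := by
    have hle : ∀ s ∈ Finset.univ, pH s ≤ pL s := by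
      intro s _
      have h3 := S.pH_eq s
      have h4 := S.hltop s
      rw [hltop1] at h4
      have := S.hpL s
      nlinarith
    have hsum : ∑ s, pH s = ∑ s, pL s := by rw [S.hsH, S.hsL]
    exact fun s => (Finset.sum_eq_sum_iff_of_le hle).1 hsum s (Finset.mem_univ s)
  have hzero : IsEquilibrium ρ c n pL pH (fun _ => 0) := by
    rw [S.eq_iff hn]
    refine ⟨fun s => ⟨le_refl _, zero_le_one⟩, fun s => ⟨?_, ?_⟩⟩
    all_goals {
      intro h
      exfalso
      have hre : rej pH (fun _ => 0) = rej pL (fun _ => 0) := by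
        unfold rej
        simp
      have hBf : Bf ρ c n pL pH (fun _ => 0) s = 0 := by
        unfold Bf
        rw [hre, hpHL s, heq]
        ring
      rw [hBf] at h
      exact lt_irrefl 0 h
    }
  have hσ0 : ∀ s, σ s = 0 := fun s =>
    le_antisymm (hms.2 _ hzero s) (hms.1.1 s).1
  refine ⟨hρc, ?_⟩
  have haccH : rej pH σ = 1 := by
    unfold rej
    have : ∑ s, pH s * σ s = 0 :=
      Finset.sum_eq_zero fun s _ => by rw [hσ0 s, mul_zero]
    rw [this]
    ring
  have haccL : rej pL σ = 1 := by
    unfold rej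
    have : ∑ s, pL s * σ s = 0 :=
      Finset.sum_eq_zero fun s _ => by rw [hσ0 s, mul_zero]
    rw [this]
    ring
  unfold surplus
  rw [haccH, haccL, one_pow]
  ring

end Setup

/-! ### constructing the setup from the experiment -/

lemma mk_setup {m : ℕ} (ρ c : ℝ) (hρ : ρ ∈ Set.Ioo (0:ℝ) 1) (hc : c ∈ Set.Ioo (0:ℝ) 1)
    (pL pH : Fin m → ℝ) (hE : IsExperiment pL pH) (top : Fin m)
    (htopmax : ∀ s : Fin m, s ≤ top) (htop : 0 < pL top) :
    Setup ρ c pL pH top := by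
  obtain ⟨hL0, hH0, hsL, hsH, hsup, hmlrp⟩ := hE
  have hpL : ∀ s, 0 < pL s := by
    intro s
    rcases (hL0 s).eq_or_lt with h | h
    · exfalso
      have hpHs : 0 < pH s := by
        have := hsup s
        linarith
    -- pH s * pL top ≤ pH top * pL s = 0
      have hm := hmlrp s top (htopmax s)
      rw [← h] at hm
      nlinarith
    · exact h
  refine ⟨hρ.1, hρ.2, hc.1, hc.2, hpL, hH0, hsL, hsH, ?_⟩
  intro s
  unfold lr
  rw [div_le_div_iff₀ (hpL s) (hpL top)]
  exact hmlrp s top (htopmax s)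

end MB

/-- if no outcome fully reveals High quality, surplus in the most selective
equilibrium is eventually weakly decreasing in the number of buyers and converges to
the no-information benchmark `max{0, ρ - c}`. -/
theorem more_buyers_bounded_likelihood
    (ρ c : ℝ) (hρ : ρ ∈ Set.Ioo (0:ℝ) 1) (hc : c ∈ Set.Ioo (0:ℝ) 1)
    (m : ℕ) (hm : 1 ≤ m)
    (pL pH : Fin m → ℝ) (hE : IsExperiment pL pH)
    (htop : 0 < pL ⟨m - 1, by omega⟩)
    (σhat : ℕ → Fin m → ℝ)
    (hσ : ∀ k : ℕ, 1 ≤ k → MostSelective ρ c k pL pH (σhat k)) :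
    (∃ N : ℕ, ∀ k : ℕ, N ≤ k →
      surplus ρ c (k + 1) pL pH (σhat (k + 1)) ≤ surplus ρ c k pL pH (σhat k)) ∧
    Tendsto (fun k : ℕ => surplus ρ c k pL pH (σhat k)) atTop (𝓝 (max 0 (ρ - c))) := by
  have hρ0 := hρ.1
  have hρ1 := hρ.2
  have hc0 := hc.1
  have hc1 := hc.2
  set top : Fin m := ⟨m - 1, by omega⟩ with htopdef
  have htopmax : ∀ s : Fin m, s ≤ top := by
    intro s
    rw [Fin.le_def]
    have := s.isLt
    simp only [htopdef]
    omega
  have S : MB.Setup ρ c pL pH top := MB.mk_setup ρ c hρ hc pL pH hE top htopmax htop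
  rcases lt_or_ge ρ c with hρc | hcρ
  · -- ρ < c : the surplus is eventually identically 0
    obtain ⟨N₀, hN₀⟩ := Filter.eventually_atTop.1 (S.low_case hρc)
    have hzero : ∀ n, max N₀ 1 ≤ n → surplus ρ c n pL pH (σhat n) = 0 := by
      intro n hn
      exact hN₀ n (le_trans (le_max_left _ _) hn) (σhat n)
        (hσ n (le_trans (le_max_right _ _) hn)).1
    constructor
    · refine ⟨max N₀ 1, fun k hk => ?_⟩
      rw [hzero (k+1) (by omega), hzero k hk]
    · have hmax : max 0 (ρ - c) = 0 := max_eq_left (by linarith)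
      rw [hmax]
      apply Filter.Tendsto.congr' _ tendsto_const_nhds
      rw [Filter.eventuallyEq_iff_exists_mem]
      exact ⟨{n | max N₀ 1 ≤ n}, Filter.mem_atTop _, fun n hn => (hzero n hn).symm⟩
  · by_cases hKD : c*(1-ρ) < (1-c)*ρ * MB.lr pL pH top
    · -- main case
      constructor
      · -- eventual monotonicity
        have hstab := fun t => S.pureGE_eq_stabilizes t
        choose v hv using hstab
        have hall : ∀ᶠ n in Filter.atTop, ∀ t : Fin m,
            (IsEquilibrium ρ c n pL pH (MB.pureGE pL pH (MB.lr pL pH t)) ↔ v t) :=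
          Filter.eventually_all.2 hv
        obtain ⟨N₁, hN₁⟩ := Filter.eventually_atTop.1
          ((hall.and (S.HN_eventually.and (Filter.eventually_ge_atTop 1))))
        have hpure : ∀ n, N₁ ≤ n → ∃ t, σhat n = MB.pureGE pL pH (MB.lr pL pH t) := by
          intro n hn
          exact S.purity (hN₁ n hn).2.2 hcρ hKD (hN₁ n hn).2.1 (hσ n (hN₁ n hn).2.2)
        have hstep : ∀ n, N₁ ≤ n → σhat (n+1) = σhat n := by
          intro n hn
          obtain ⟨t1, ht1⟩ := hpure n hn
          obtain ⟨t2, ht2⟩ := hpure (n+1) (by omega)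
          have hn1 : 1 ≤ n := (hN₁ n hn).2.2
          have he1 : IsEquilibrium ρ c n pL pH (MB.pureGE pL pH (MB.lr pL pH t1)) := by
            rw [← ht1]; exact (hσ n hn1).1
          have hv1 : v t1 := ((hN₁ n hn).1 t1).1 he1
          have he1' : IsEquilibrium ρ c (n+1) pL pH (MB.pureGE pL pH (MB.lr pL pH t1)) :=
            ((hN₁ (n+1) (by omega)).1 t1).2 hv1
          have he2 : IsEquilibrium ρ c (n+1) pL pH (MB.pureGE pL pH (MB.lr pL pH t2)) := by
            rw [← ht2]; exact (hσ (n+1) (by omega)).1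
          have hv2 : v t2 := ((hN₁ (n+1) (by omega)).1 t2).1 he2
          have he2' : IsEquilibrium ρ c n pL pH (MB.pureGE pL pH (MB.lr pL pH t2)) :=
            ((hN₁ n hn).1 t2).2 hv2
          have hle1 := (hσ (n+1) (by omega)).2 _ he1'
          have hle2 := (hσ n hn1).2 _ he2'
          have h12 : MB.lr pL pH t1 ≤ MB.lr pL pH t2 := by
            by_contra hcon
            have := hle1 t2
            rw [ht2] at this
            unfold MB.pureGE at this
            rw [if_pos (le_refl _), if_neg hcon] at this
            linarith
          have h21 : MB.lr pL pH t2 ≤ MB.lr pL pH t1 := by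
            by_contra hcon
            have := hle2 t1
            rw [ht1] at this
            unfold MB.pureGE at this
            rw [if_pos (le_refl _), if_neg hcon] at this
            linarith
          rw [ht1, ht2, le_antisymm h12 h21]
        have hconst : ∀ n, N₁ ≤ n → σhat n = σhat N₁ := by
          intro n hn
          induction n, hn using Nat.le_induction with
          | base => rfl
          | succ k hk ih => rw [hstep k hk, ih]
        obtain ⟨tstar, htstar⟩ := hpure N₁ (le_refl _)
        obtain ⟨N₂, hN₂⟩ := Filter.eventually_atTop.1 (S.final_mono hcρ tstar)
        refine ⟨max N₁ N₂, fun k hk => ?_⟩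
        have hk1 : N₁ ≤ k := le_trans (le_max_left _ _) hk
        have hk2 : N₂ ≤ k := le_trans (le_max_right _ _) hk
        rw [hconst k hk1, hconst (k+1) (by omega), htstar]
        exact hN₂ k hk2
      · -- convergence
        have hmax : max 0 (ρ - c) = ρ - c := max_eq_right (by linarith)
        rw [hmax]
        have hM := S.Mtop_pos
        have hM1 := S.Mtop_le_one
        have hgt : Filter.Tendsto (fun n : ℕ => 2*(1 - MB.Mtop pL pH top)^n)
            Filter.atTop (𝓝 (2*0)) :=
          (tendsto_pow_atTop_nhds_zero_of_lt_one (by linarith) (by linarith)).const_mul 2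
        rw [mul_zero] at hgt
        have hb : ∀ᶠ n in Filter.atTop,
            |surplus ρ c n pL pH (σhat n) - (ρ - c)| ≤ 2*(1 - MB.Mtop pL pH top)^n := by
          rw [Filter.eventually_atTop]
          exact ⟨1, fun n hn => S.surplus_close hcρ hKD hn (hσ n hn).1⟩
        rw [← tendsto_sub_nhds_zero_iff]
        exact squeeze_zero_norm' (by simpa [Real.norm_eq_abs] using hb) hgt
    · -- degenerate case: ρ = c and everything is zero
      push_neg at hKD
      have hd : ∀ n, 1 ≤ n → ρ = c ∧ surplus ρ c n pL pH (σhat n) = 0 :=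
        fun n hn => S.d0_case hcρ hKD hn (hσ n hn)
      have hρeq : ρ = c := (hd 1 (le_refl _)).1
      constructor
      · refine ⟨1, fun k hk => ?_⟩
        rw [(hd (k+1) (by omega)).2, (hd k hk).2]
      · have hmax : max 0 (ρ - c) = 0 := max_eq_left (by linarith)
        rw [hmax]
        apply Filter.Tendsto.congr' _ tendsto_const_nhds
        rw [Filter.eventuallyEq_iff_exists_mem]
        exact ⟨{n | 1 ≤ n}, Filter.mem_atTop _, fun n hn => ((hd n hn).2).symm⟩
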